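/- Strong Completeness of the natural deduction system of MD∨: for any set Γ∪{φ} of MD∨-formulas, Γ⊨φ if and only if Γ⊢_{MD∨}φ. -/

import Mathlib

/-- Classical formulas of MD∨: α ::= p | ⊥ | ¬α | α∧α | α⊗α | □α | ◇α. -/
inductive CForm : Type where
  | var : ℕ → CForm
  | bot : CForm
  | neg : CForm → CForm
  | and : CForm → CForm → CForm
  | tensor : CForm → CForm → CForm
  | box : CForm → CForm
  | dia : CForm → CForm

/-- Formulas of MD∨ (modal dependence logic with intuitionistic disjunction):
φ ::= α | =(α₁,…,αₙ,β) | φ∧φ | φ⊗φ | φ∨φ | □φ | ◇φ, with α,αᵢ,β classical.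
Classical formulas are embedded structurally; the primitive (classical) negation
is represented by the constructor `cneg`. -/
inductive MDVForm : Type where
  | var : ℕ → MDVForm
  | bot : MDVForm
  | cneg : CForm → MDVForm
  | dep : List CForm → CForm → MDVForm
  | and : MDVForm → MDVForm → MDVForm
  | tensor : MDVForm → MDVForm → MDVForm
  | or : MDVForm → MDVForm → MDVForm
  | box : MDVForm → MDVForm
  | dia : MDVForm → MDVForm

/-- The structural embedding of classical formulas into MD∨ formulas. -/
def CForm.toMDV : CForm → MDVForm
  | .var p => .var p
  | .bot => .bot
  | .neg α => .cneg α
  | .and α β => .and α.toMDV β.toMDV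
  | .tensor α β => .tensor α.toMDV β.toMDV
  | .box α => .box α.toMDV
  | .dia α => .dia α.toMDV

/-- A (classical modal) Kripke model M = (W,R,V) with W nonempty. -/
structure KModel where
  W : Type
  ne : Nonempty W
  R : W → W → Prop
  V : ℕ → Set W

/-- R(X) = {w : ∃ v ∈ X, vRw}. -/
def KModel.img (M : KModel) (X : Set M.W) : Set M.W := {w | ∃ v ∈ X, M.R v w}

/-- Y is a successor team of X: Y ⊆ R(X) and Y ∩ R(w) ≠ ∅ for every w ∈ X. -/
def KModel.succT (M : KModel) (X Y : Set M.W) : Prop :=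
  Y ⊆ M.img X ∧ ∀ w ∈ X, ∃ u ∈ Y, M.R w u

/-- Team semantics for classical formulas. -/
def KModel.csat (M : KModel) : Set M.W → CForm → Prop
  | X, .var p => X ⊆ M.V p
  | X, .bot => X = ∅
  | X, .neg α => ∀ w ∈ X, ¬ M.csat {w} α
  | X, .and α β => M.csat X α ∧ M.csat X β
  | X, .tensor α β => ∃ Y Z, X = Y ∪ Z ∧ M.csat Y α ∧ M.csat Z β
  | X, .box α => M.csat (M.img X) α
  | X, .dia α => ∃ Y, M.succT X Y ∧ M.csat Y α

/-- Team semantics for MD∨ formulas. -/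
def KModel.sat (M : KModel) : Set M.W → MDVForm → Prop
  | X, .var p => X ⊆ M.V p
  | X, .bot => X = ∅
  | X, .cneg α => ∀ w ∈ X, ¬ M.csat {w} α
  | X, .dep αs β => ∀ w ∈ X, ∀ u ∈ X,
      (∀ α ∈ αs, (M.csat {w} α ↔ M.csat {u} α)) → (M.csat {w} β ↔ M.csat {u} β)
  | X, .and φ ψ => M.sat X φ ∧ M.sat X ψ
  | X, .tensor φ ψ => ∃ Y Z, X = Y ∪ Z ∧ M.sat Y φ ∧ M.sat Z ψ
  | X, .or φ ψ => M.sat X φ ∨ M.sat X ψ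
  | X, .box φ => M.sat (M.img X) φ
  | X, .dia φ => ∃ Y, M.succT X Y ∧ M.sat Y φ

/-- Γ⊨φ : semantic entailment from a set of premises. -/
def SetEntails (Γ : Set MDVForm) (φ : MDVForm) : Prop :=
  ∀ (M : KModel) (X : Set M.W), (∀ γ ∈ Γ, M.sat X γ) → M.sat X φ

/-- φ⊨ψ : semantic entailment. -/
def MDVEntails (φ ψ : MDVForm) : Prop :=
  ∀ (M : KModel) (X : Set M.W), M.sat X φ → M.sat X ψ

/-- Conjunction of a list of formulas (used only for nonempty lists). -/
def bigAnd : List MDVForm → MDVForm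
  | [] => .bot
  | [φ] => φ
  | φ :: ψ :: χs => .and φ (bigAnd (ψ :: χs))

/-- Tensor of a list of formulas (used only for nonempty lists). -/
def bigTensor : List MDVForm → MDVForm
  | [] => .bot
  | [φ] => φ
  | φ :: ψ :: χs => .tensor φ (bigTensor (ψ :: χs))

/-- α^1 := α and α^0 := ¬α. -/
def signed (b : Bool) (α : CForm) : MDVForm := if b then α.toMDV else .cneg α

/-- All Boolean vectors of length n (representing the functions v ∈ 2^{1,…,n}). -/
def allVecs : ℕ → List (List Bool)
  | 0 => [[]]
  | n + 1 => ((allVecs n).map (List.cons true)) ++ ((allVecs n).map (List.cons false))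

/-- The conjunct α₁^{v(1)} ∧ ⋯ ∧ αₖ^{v(k)} ∧ (β ∨ ¬β) for a sign vector v. -/
def depRow (αs : List CForm) (β : CForm) (v : List Bool) : MDVForm :=
  bigAnd (List.zipWith signed v αs ++ [MDVForm.or β.toMDV (.cneg β)])

/-- ⊗_{v ∈ 2^{1,…,k}} (α₁^{v(1)} ∧ ⋯ ∧ αₖ^{v(k)} ∧ (β ∨ ¬β)). -/
def depTensor (αs : List CForm) (β : CForm) : MDVForm :=
  bigTensor ((allVecs αs.length).map (depRow αs β))

/-- The natural deduction system of MD∨ : Γ ⊢ φ. -/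
inductive ND : Set MDVForm → MDVForm → Prop where
  | hyp {Γ : Set MDVForm} {φ : MDVForm} : φ ∈ Γ → ND Γ φ
  | andI {Γ : Set MDVForm} {φ ψ : MDVForm} : ND Γ φ → ND Γ ψ → ND Γ (φ.and ψ)
  | andE1 {Γ : Set MDVForm} {φ ψ : MDVForm} : ND Γ (φ.and ψ) → ND Γ φ
  | andE2 {Γ : Set MDVForm} {φ ψ : MDVForm} : ND Γ (φ.and ψ) → ND Γ ψ
  | dne {Γ : Set MDVForm} (α : CForm) : ND Γ (.cneg (.neg α)) → ND Γ α.toMDV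
  | exfalso {Γ : Set MDVForm} {φ : MDVForm} : ND Γ .bot → ND Γ φ
  | boxMon {Γ : Set MDVForm} {ψ : MDVForm} (l : List MDVForm) :
      (∀ χ ∈ l, ND Γ (.box χ)) → ND {χ | χ ∈ l} ψ → ND Γ (.box ψ)
  | interBoxDia {Γ : Set MDVForm} (α : CForm) :
      ND Γ (.cneg (.box α)) → ND Γ (.dia (.cneg α))
  | orI1 {Γ : Set MDVForm} {φ ψ : MDVForm} : ND Γ φ → ND Γ (φ.or ψ)
  | orI2 {Γ : Set MDVForm} {φ ψ : MDVForm} : ND Γ ψ → ND Γ (φ.or ψ)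
  | orE {Γ : Set MDVForm} {φ ψ χ : MDVForm} :
      ND Γ (φ.or ψ) → ND (insert φ Γ) χ → ND (insert ψ Γ) χ → ND Γ χ
  | distrTensorOr {Γ : Set MDVForm} {φ ψ χ : MDVForm} :
      ND Γ (φ.tensor (ψ.or χ)) → ND Γ ((φ.tensor ψ).or (φ.tensor χ))
  | distrDiaOr {Γ : Set MDVForm} {φ ψ : MDVForm} :
      ND Γ (.dia (φ.or ψ)) → ND Γ ((MDVForm.dia φ).or (.dia ψ))
  | distrBoxOr {Γ : Set MDVForm} {φ ψ : MDVForm} :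
      ND Γ (.box (φ.or ψ)) → ND Γ ((MDVForm.box φ).or (.box ψ))
  | tensorI {Γ : Set MDVForm} {φ : MDVForm} (ψ : MDVForm) : ND Γ φ → ND Γ (φ.tensor ψ)
  | tensorE {Γ : Set MDVForm} {φ ψ : MDVForm} (α : CForm) : ND Γ (φ.tensor ψ) →
      ND (insert φ Γ) α.toMDV → ND (insert ψ Γ) α.toMDV → ND Γ α.toMDV
  | tensorSub {Γ : Set MDVForm} {φ ψ χ : MDVForm} :
      ND Γ (φ.tensor ψ) → ND (insert ψ Γ) χ → ND Γ (φ.tensor χ)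
  | tensorComm {Γ : Set MDVForm} {φ ψ : MDVForm} : ND Γ (φ.tensor ψ) → ND Γ (ψ.tensor φ)
  | tensorAssoc {Γ : Set MDVForm} {φ ψ χ : MDVForm} :
      ND Γ (φ.tensor (ψ.tensor χ)) → ND Γ ((φ.tensor ψ).tensor χ)
  | depI {Γ : Set MDVForm} (αs : List CForm) (β : CForm) :
      ND Γ (depTensor αs β) → ND Γ (.dep αs β)
  | depE {Γ : Set MDVForm} (αs : List CForm) (β : CForm) :
      ND Γ (.dep αs β) → ND Γ (depTensor αs β)
  | negI {Γ : Set MDVForm} (α : CForm) : ND (insert α.toMDV Γ) .bot → ND Γ (.cneg α)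
  | negE {Γ : Set MDVForm} (α : CForm) : ND Γ α.toMDV → ND Γ (.cneg α) → ND Γ .bot
  | diaMon {Γ : Set MDVForm} {φ ψ : MDVForm} : ND Γ (.dia φ) → ND {φ} ψ → ND Γ (.dia ψ)
  | interDiaBox {Γ : Set MDVForm} (α : CForm) :
      ND Γ (.dia (.cneg α)) → ND Γ (.cneg (.box α))

namespace KModel
variable {M : KModel}

theorem img_empty : M.img (∅ : Set M.W) = ∅ := by
  ext w; simp [KModel.img]

theorem mem_img {X : Set M.W} {u : M.W} : u ∈ M.img X ↔ ∃ w ∈ X, M.R w u := Iff.rfl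

theorem img_mono {X Y : Set M.W} (h : X ⊆ Y) : M.img X ⊆ M.img Y := by
  rintro u ⟨w, hw, hR⟩; exact ⟨w, h hw, hR⟩

/-- Flatness of classical formulas. -/
theorem csat_flat (α : CForm) : ∀ X : Set M.W, M.csat X α ↔ ∀ w ∈ X, M.csat {w} α := by
  induction α with
  | var p => intro X; simp [KModel.csat, Set.subset_def, Set.singleton_subset_iff]
  | bot =>
    intro X
    constructor
    · rintro rfl w hw; exact absurd hw (by simp)
    · intro h
      ext w; simp only [Set.mem_empty_iff_false, iff_false]
      intro hw
      have := h w hw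
      simp only [KModel.csat] at this
      exact absurd this (by simp [Set.eq_empty_iff_forall_notMem])
  | neg α ih =>
    intro X
    simp only [KModel.csat]
    constructor
    · intro h w hw u hu
      rw [Set.mem_singleton_iff] at hu
      subst hu
      exact h _ hw
    · intro h w hw
      exact h w hw w rfl
  | and α β ihα ihβ =>
    intro X
    simp only [KModel.csat]
    rw [ihα, ihβ]
    constructor
    · intro h w hw; exact ⟨h.1 w hw, h.2 w hw⟩
    · intro h; exact ⟨fun w hw => (h w hw).1, fun w hw => (h w hw).2⟩
  | tensor α β ihα ihβ =>
    intro X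
    constructor
    · rintro ⟨Y, Z, rfl, hY, hZ⟩ w hw
      rcases hw with hw | hw
      · exact ⟨{w}, ∅, by simp, (ihα Y).1 hY w hw, (ihβ ∅).2 (by simp)⟩
      · exact ⟨∅, {w}, by simp, (ihα ∅).2 (by simp), (ihβ Z).1 hZ w hw⟩
    · intro h
      refine ⟨{w ∈ X | M.csat {w} α}, {w ∈ X | ¬ M.csat {w} α}, ?_, ?_, ?_⟩
      · ext w; by_cases hc : M.csat {w} α <;> simp [hc]
      · exact (ihα _).2 fun w hw => hw.2
      · refine (ihβ _).2 fun w hw => ?_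
        rcases h w hw.1 with ⟨Y, Z, hYZ, hY, hZ⟩
        have hwYZ : w ∈ Y ∪ Z := hYZ ▸ rfl
        rcases hwYZ with hwY | hwZ
        · exact absurd ((ihα Y).1 hY w hwY) hw.2
        · exact (ihβ Z).1 hZ w hwZ
  | box α ih =>
    intro X
    simp only [KModel.csat]
    rw [ih]
    constructor
    · intro h w hw
      refine (ih _).2 ?_
      rintro u ⟨v, hv, hR⟩
      rw [Set.mem_singleton_iff] at hv; subst hv
      exact h u ⟨_, hw, hR⟩
    · rintro h u ⟨w, hw, hR⟩
      exact (ih _).1 (h w hw) u ⟨w, rfl, hR⟩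
  | dia α ih =>
    intro X
    constructor
    · rintro ⟨Y, ⟨hsub, hsucc⟩, hα⟩ w hw
      refine ⟨{u | u ∈ Y ∧ M.R w u}, ⟨?_, ?_⟩, ?_⟩
      · rintro u ⟨huY, hR⟩; exact ⟨w, rfl, hR⟩
      · rintro v rfl
        rcases hsucc v hw with ⟨u, huY, hR⟩
        exact ⟨u, ⟨huY, hR⟩, hR⟩
      · exact (ih _).2 fun u hu => (ih Y).1 hα u hu.1
    · intro h
      choose Y hY hYα using h
      refine ⟨{u | ∃ w, ∃ hw : w ∈ X, u ∈ Y w hw}, ⟨?_, ?_⟩, ?_⟩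
      · rintro u ⟨w, hw, hu⟩
        rcases (hY w hw).1 hu with ⟨v, hv, hR⟩
        rw [Set.mem_singleton_iff] at hv; subst hv
        exact ⟨_, hw, hR⟩
      · intro w hw
        rcases (hY w hw).2 w rfl with ⟨u, huY, hR⟩
        exact ⟨u, ⟨w, hw, huY⟩, hR⟩
      · refine (ih _).2 ?_
        rintro u ⟨w, hw, hu⟩
        exact (ih _).1 (hYα w hw) u hu

theorem csat_empty (α : CForm) : M.csat (∅ : Set M.W) α :=
  (csat_flat α ∅).2 (by simp)

theorem csat_mono {α : CForm} {X Y : Set M.W} (h : Y ⊆ X) (hX : M.csat X α) :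
    M.csat Y α :=
  (csat_flat α Y).2 fun w hw => (csat_flat α X).1 hX w (h hw)

/-- The embedding preserves satisfaction. -/
theorem sat_toMDV (α : CForm) : ∀ X : Set M.W, M.sat X α.toMDV ↔ M.csat X α := by
  induction α with
  | var p => intro X; rfl
  | bot => intro X; rfl
  | neg α ih => intro X; rfl
  | and α β ihα ihβ =>
    intro X; simp only [CForm.toMDV, KModel.sat, KModel.csat, ihα, ihβ]
  | tensor α β ihα ihβ =>
    intro X
    simp only [CForm.toMDV, KModel.sat, KModel.csat]
    constructor
    · rintro ⟨Y, Z, h, hY, hZ⟩; exact ⟨Y, Z, h, (ihα Y).1 hY, (ihβ Z).1 hZ⟩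
    · rintro ⟨Y, Z, h, hY, hZ⟩; exact ⟨Y, Z, h, (ihα Y).2 hY, (ihβ Z).2 hZ⟩
  | box α ih => intro X; simp only [CForm.toMDV, KModel.sat, KModel.csat, ih]
  | dia α ih =>
    intro X
    simp only [CForm.toMDV, KModel.sat, KModel.csat]
    constructor
    · rintro ⟨Y, h, hY⟩; exact ⟨Y, h, (ih Y).1 hY⟩
    · rintro ⟨Y, h, hY⟩; exact ⟨Y, h, (ih Y).2 hY⟩

/-- Empty team property. -/
theorem sat_empty (φ : MDVForm) : M.sat (∅ : Set M.W) φ := by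
  induction φ with
  | var p => simp [KModel.sat]
  | bot => simp [KModel.sat]
  | cneg α => simp [KModel.sat]
  | dep αs β => simp [KModel.sat]
  | and φ ψ ihφ ihψ => exact ⟨ihφ, ihψ⟩
  | tensor φ ψ ihφ ihψ => exact ⟨∅, ∅, by simp, ihφ, ihψ⟩
  | or φ ψ ihφ ihψ => exact Or.inl ihφ
  | box φ ih => show M.sat (M.img ∅) φ; rwa [img_empty]
  | dia φ ih => exact ⟨∅, ⟨by simp, by simp⟩, ih⟩

/-- Downward closure. -/
theorem sat_mono (φ : MDVForm) : ∀ X Y : Set M.W, Y ⊆ X → M.sat X φ → M.sat Y φ := by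
  induction φ with
  | var p => intro X Y h hX; exact subset_trans h hX
  | bot => intro X Y h hX; rcases hX with rfl; exact Set.subset_eq_empty h rfl
  | cneg α => intro X Y h hX w hw; exact hX w (h hw)
  | dep αs β => intro X Y h hX w hw u hu; exact hX w (h hw) u (h hu)
  | and φ ψ ihφ ihψ =>
    intro X Y h hX; exact ⟨ihφ X Y h hX.1, ihψ X Y h hX.2⟩
  | tensor φ ψ ihφ ihψ =>
    rintro X Y h ⟨Z₁, Z₂, rfl, h₁, h₂⟩
    refine ⟨Y ∩ Z₁, Y ∩ Z₂, ?_, ihφ Z₁ _ (Set.inter_subset_right) h₁,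
      ihψ Z₂ _ (Set.inter_subset_right) h₂⟩
    rw [← Set.inter_union_distrib_left]
    exact (Set.inter_eq_left.2 h).symm
  | or φ ψ ihφ ihψ =>
    rintro X Y h (hX | hX)
    · exact Or.inl (ihφ X Y h hX)
    · exact Or.inr (ihψ X Y h hX)
  | box φ ih =>
    intro X Y h hX
    exact ih _ _ (img_mono h) hX
  | dia φ ih =>
    rintro X Y h ⟨Z, ⟨hsub, hsucc⟩, hZ⟩
    refine ⟨{u | u ∈ Z ∧ ∃ w ∈ Y, M.R w u}, ⟨?_, ?_⟩, ?_⟩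
    · rintro u ⟨huZ, w, hw, hR⟩; exact ⟨w, hw, hR⟩
    · intro w hw
      rcases hsucc w (h hw) with ⟨u, huZ, hR⟩
      exact ⟨u, ⟨huZ, w, hw, hR⟩, hR⟩
    · exact ih Z _ (fun u hu => hu.1) hZ

end KModel
namespace ND

theorem weaken {Γ Δ : Set MDVForm} {φ : MDVForm} (h : ND Γ φ) (hsub : Γ ⊆ Δ) :
    ND Δ φ := by
  induction h generalizing Δ with
  | hyp h => exact ND.hyp (hsub h)
  | andI _ _ ih1 ih2 => exact ND.andI (ih1 hsub) (ih2 hsub)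
  | andE1 _ ih => exact ND.andE1 (ih hsub)
  | andE2 _ ih => exact ND.andE2 (ih hsub)
  | dne α _ ih => exact ND.dne α (ih hsub)
  | exfalso _ ih => exact ND.exfalso (ih hsub)
  | boxMon l _ h2 ih1 _ => exact ND.boxMon l (fun χ hχ => ih1 χ hχ hsub) h2
  | interBoxDia α _ ih => exact ND.interBoxDia α (ih hsub)
  | orI1 _ ih => exact ND.orI1 (ih hsub)
  | orI2 _ ih => exact ND.orI2 (ih hsub)
  | orE _ _ _ ih1 ih2 ih3 =>
    exact ND.orE (ih1 hsub) (ih2 (Set.insert_subset_insert hsub))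
      (ih3 (Set.insert_subset_insert hsub))
  | distrTensorOr _ ih => exact ND.distrTensorOr (ih hsub)
  | distrDiaOr _ ih => exact ND.distrDiaOr (ih hsub)
  | distrBoxOr _ ih => exact ND.distrBoxOr (ih hsub)
  | tensorI ψ _ ih => exact ND.tensorI ψ (ih hsub)
  | tensorE α _ _ _ ih1 ih2 ih3 =>
    exact ND.tensorE α (ih1 hsub) (ih2 (Set.insert_subset_insert hsub))
      (ih3 (Set.insert_subset_insert hsub))
  | tensorSub _ _ ih1 ih2 =>
    exact ND.tensorSub (ih1 hsub) (ih2 (Set.insert_subset_insert hsub))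
  | tensorComm _ ih => exact ND.tensorComm (ih hsub)
  | tensorAssoc _ ih => exact ND.tensorAssoc (ih hsub)
  | depI αs β _ ih => exact ND.depI αs β (ih hsub)
  | depE αs β _ ih => exact ND.depE αs β (ih hsub)
  | negI α _ ih => exact ND.negI α (ih (Set.insert_subset_insert hsub))
  | negE α _ _ ih1 ih2 => exact ND.negE α (ih1 hsub) (ih2 hsub)
  | diaMon _ h2 ih1 _ => exact ND.diaMon (ih1 hsub) h2
  | interDiaBox α _ ih => exact ND.interDiaBox α (ih hsub)

private theorem insert_swap_subset {Δ Γ : Set MDVForm} {φ χ : MDVForm}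
    (hsub : Δ ⊆ insert φ Γ) : insert χ Δ ⊆ insert φ (insert χ Γ) := by
  intro x hx
  rcases hx with rfl | hx
  · exact Set.mem_insert_of_mem _ (Set.mem_insert _ _)
  · rcases hsub hx with rfl | hx
    · exact Set.mem_insert _ _
    · exact Set.mem_insert_of_mem _ (Set.mem_insert_of_mem _ hx)

theorem cut_aux {Δ : Set MDVForm} {ψ : MDVForm} (h : ND Δ ψ) :
    ∀ {Γ : Set MDVForm} {φ : MDVForm}, ND Γ φ → Δ ⊆ insert φ Γ → ND Γ ψ := by
  induction h with
  | hyp hmem =>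
    intro Γ φ hφ hsub
    rcases hsub hmem with rfl | h
    · exact hφ
    · exact ND.hyp h
  | andI _ _ ih1 ih2 => intro Γ φ hφ hsub; exact ND.andI (ih1 hφ hsub) (ih2 hφ hsub)
  | andE1 _ ih => intro Γ φ hφ hsub; exact ND.andE1 (ih hφ hsub)
  | andE2 _ ih => intro Γ φ hφ hsub; exact ND.andE2 (ih hφ hsub)
  | dne α _ ih => intro Γ φ hφ hsub; exact ND.dne α (ih hφ hsub)
  | exfalso _ ih => intro Γ φ hφ hsub; exact ND.exfalso (ih hφ hsub)
  | boxMon l _ h2 ih1 _ =>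
    intro Γ φ hφ hsub
    exact ND.boxMon l (fun χ hχ => ih1 χ hχ hφ hsub) h2
  | interBoxDia α _ ih => intro Γ φ hφ hsub; exact ND.interBoxDia α (ih hφ hsub)
  | orI1 _ ih => intro Γ φ hφ hsub; exact ND.orI1 (ih hφ hsub)
  | orI2 _ ih => intro Γ φ hφ hsub; exact ND.orI2 (ih hφ hsub)
  | orE _ _ _ ih1 ih2 ih3 =>
    intro Γ φ hφ hsub
    exact ND.orE (ih1 hφ hsub)
      (ih2 (weaken hφ (Set.subset_insert _ _)) (insert_swap_subset hsub))
      (ih3 (weaken hφ (Set.subset_insert _ _)) (insert_swap_subset hsub))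
  | distrTensorOr _ ih => intro Γ φ hφ hsub; exact ND.distrTensorOr (ih hφ hsub)
  | distrDiaOr _ ih => intro Γ φ hφ hsub; exact ND.distrDiaOr (ih hφ hsub)
  | distrBoxOr _ ih => intro Γ φ hφ hsub; exact ND.distrBoxOr (ih hφ hsub)
  | tensorI ψ' _ ih => intro Γ φ hφ hsub; exact ND.tensorI ψ' (ih hφ hsub)
  | tensorE α _ _ _ ih1 ih2 ih3 =>
    intro Γ φ hφ hsub
    exact ND.tensorE α (ih1 hφ hsub)
      (ih2 (weaken hφ (Set.subset_insert _ _)) (insert_swap_subset hsub))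
      (ih3 (weaken hφ (Set.subset_insert _ _)) (insert_swap_subset hsub))
  | tensorSub _ _ ih1 ih2 =>
    intro Γ φ hφ hsub
    exact ND.tensorSub (ih1 hφ hsub)
      (ih2 (weaken hφ (Set.subset_insert _ _)) (insert_swap_subset hsub))
  | tensorComm _ ih => intro Γ φ hφ hsub; exact ND.tensorComm (ih hφ hsub)
  | tensorAssoc _ ih => intro Γ φ hφ hsub; exact ND.tensorAssoc (ih hφ hsub)
  | depI αs β _ ih => intro Γ φ hφ hsub; exact ND.depI αs β (ih hφ hsub)
  | depE αs β _ ih => intro Γ φ hφ hsub; exact ND.depE αs β (ih hφ hsub)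
  | negI α _ ih =>
    intro Γ φ hφ hsub
    exact ND.negI α
      (ih (weaken hφ (Set.subset_insert _ _)) (insert_swap_subset hsub))
  | negE α _ _ ih1 ih2 =>
    intro Γ φ hφ hsub; exact ND.negE α (ih1 hφ hsub) (ih2 hφ hsub)
  | diaMon _ h2 ih1 _ => intro Γ φ hφ hsub; exact ND.diaMon (ih1 hφ hsub) h2
  | interDiaBox α _ ih => intro Γ φ hφ hsub; exact ND.interDiaBox α (ih hφ hsub)

theorem cut {Γ : Set MDVForm} {φ ψ : MDVForm} (h1 : ND Γ φ)
    (h2 : ND (insert φ Γ) ψ) : ND Γ ψ :=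
  cut_aux h2 h1 subset_rfl

/-- Compose a derivation with a one-premise derivation. -/
theorem comp {Γ : Set MDVForm} {φ ψ : MDVForm} (h1 : ND Γ φ) (h2 : ND {φ} ψ) :
    ND Γ ψ :=
  cut h1 (weaken h2 (by intro x hx; rcases hx with rfl; exact Set.mem_insert _ _))

theorem finite_premises {Γ : Set MDVForm} {φ : MDVForm} (h : ND Γ φ) :
    ∃ Δ, Δ ⊆ Γ ∧ Δ.Finite ∧ ND Δ φ := by
  induction h with
  | @hyp Γ φ h => exact ⟨{φ}, by simpa using h, Set.finite_singleton φ, ND.hyp rfl⟩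
  | andI _ _ ih1 ih2 =>
    obtain ⟨Δ₁, hs1, hf1, hd1⟩ := ih1
    obtain ⟨Δ₂, hs2, hf2, hd2⟩ := ih2
    exact ⟨Δ₁ ∪ Δ₂, Set.union_subset hs1 hs2, hf1.union hf2,
      ND.andI (weaken hd1 Set.subset_union_left) (weaken hd2 Set.subset_union_right)⟩
  | andE1 _ ih =>
    obtain ⟨Δ, hs, hf, hd⟩ := ih; exact ⟨Δ, hs, hf, ND.andE1 hd⟩
  | andE2 _ ih =>
    obtain ⟨Δ, hs, hf, hd⟩ := ih; exact ⟨Δ, hs, hf, ND.andE2 hd⟩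
  | dne α _ ih =>
    obtain ⟨Δ, hs, hf, hd⟩ := ih; exact ⟨Δ, hs, hf, ND.dne α hd⟩
  | exfalso _ ih =>
    obtain ⟨Δ, hs, hf, hd⟩ := ih; exact ⟨Δ, hs, hf, ND.exfalso hd⟩
  | @boxMon Γ ψ l h1 h2 ih1 _ =>
    have : ∀ l' : List MDVForm, (∀ χ ∈ l', χ ∈ l) →
        ∃ Δ, Δ ⊆ Γ ∧ Δ.Finite ∧ ∀ χ ∈ l', ND Δ (MDVForm.box χ) := by
      intro l'
      induction l' with
      | nil => exact fun _ => ⟨∅, Set.empty_subset _, Set.finite_empty, by simp⟩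
      | cons χ T ihT =>
        intro hmem
        obtain ⟨Δ₁, hs1, hf1, hd1⟩ := ihT (fun x hx => hmem x (List.mem_cons_of_mem _ hx))
        obtain ⟨Δ₂, hs2, hf2, hd2⟩ := ih1 χ (hmem χ List.mem_cons_self)
        refine ⟨Δ₁ ∪ Δ₂, Set.union_subset hs1 hs2, hf1.union hf2, ?_⟩
        intro x hx
        rcases List.mem_cons.1 hx with rfl | hx
        · exact weaken hd2 Set.subset_union_right
        · exact weaken (hd1 x hx) Set.subset_union_left
    obtain ⟨Δ, hs, hf, hd⟩ := this l (fun _ h => h)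
    exact ⟨Δ, hs, hf, ND.boxMon l hd h2⟩
  | interBoxDia α _ ih =>
    obtain ⟨Δ, hs, hf, hd⟩ := ih; exact ⟨Δ, hs, hf, ND.interBoxDia α hd⟩
  | orI1 _ ih =>
    obtain ⟨Δ, hs, hf, hd⟩ := ih; exact ⟨Δ, hs, hf, ND.orI1 hd⟩
  | orI2 _ ih =>
    obtain ⟨Δ, hs, hf, hd⟩ := ih; exact ⟨Δ, hs, hf, ND.orI2 hd⟩
  | @orE Γ φ ψ χ _ _ _ ih1 ih2 ih3 =>
    obtain ⟨Δ₁, hs1, hf1, hd1⟩ := ih1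
    obtain ⟨Δ₂, hs2, hf2, hd2⟩ := ih2
    obtain ⟨Δ₃, hs3, hf3, hd3⟩ := ih3
    refine ⟨Δ₁ ∪ (Δ₂ \ {φ}) ∪ (Δ₃ \ {ψ}), ?_, ((hf1.union hf2.diff).union hf3.diff), ?_⟩
    · intro x hx
      rcases hx with (hx | hx) | hx
      · exact hs1 hx
      · rcases hs2 hx.1 with rfl | h
        · exact absurd rfl hx.2
        · exact h
      · rcases hs3 hx.1 with rfl | h
        · exact absurd rfl hx.2
        · exact h
    · refine ND.orE (weaken hd1 (subset_trans Set.subset_union_left Set.subset_union_left)) ?_ ?_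
      · refine weaken hd2 ?_
        intro x hx
        by_cases hxφ : x = φ
        · exact hxφ ▸ Set.mem_insert _ _
        · exact Set.mem_insert_of_mem _ (Or.inl (Or.inr ⟨hx, hxφ⟩))
      · refine weaken hd3 ?_
        intro x hx
        by_cases hxψ : x = ψ
        · exact hxψ ▸ Set.mem_insert _ _
        · exact Set.mem_insert_of_mem _ (Or.inr ⟨hx, hxψ⟩)
  | distrTensorOr _ ih =>
    obtain ⟨Δ, hs, hf, hd⟩ := ih; exact ⟨Δ, hs, hf, ND.distrTensorOr hd⟩
  | distrDiaOr _ ih =>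
    obtain ⟨Δ, hs, hf, hd⟩ := ih; exact ⟨Δ, hs, hf, ND.distrDiaOr hd⟩
  | distrBoxOr _ ih =>
    obtain ⟨Δ, hs, hf, hd⟩ := ih; exact ⟨Δ, hs, hf, ND.distrBoxOr hd⟩
  | tensorI ψ' _ ih =>
    obtain ⟨Δ, hs, hf, hd⟩ := ih; exact ⟨Δ, hs, hf, ND.tensorI ψ' hd⟩
  | @tensorE Γ φ ψ α _ _ _ ih1 ih2 ih3 =>
    obtain ⟨Δ₁, hs1, hf1, hd1⟩ := ih1
    obtain ⟨Δ₂, hs2, hf2, hd2⟩ := ih2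
    obtain ⟨Δ₃, hs3, hf3, hd3⟩ := ih3
    refine ⟨Δ₁ ∪ (Δ₂ \ {φ}) ∪ (Δ₃ \ {ψ}), ?_, ((hf1.union hf2.diff).union hf3.diff), ?_⟩
    · intro x hx
      rcases hx with (hx | hx) | hx
      · exact hs1 hx
      · rcases hs2 hx.1 with rfl | h
        · exact absurd rfl hx.2
        · exact h
      · rcases hs3 hx.1 with rfl | h
        · exact absurd rfl hx.2
        · exact h
    · refine ND.tensorE α (weaken hd1 (subset_trans Set.subset_union_left Set.subset_union_left)) ?_ ?_
      · refine weaken hd2 ?_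
        intro x hx
        by_cases hxφ : x = φ
        · exact hxφ ▸ Set.mem_insert _ _
        · exact Set.mem_insert_of_mem _ (Or.inl (Or.inr ⟨hx, hxφ⟩))
      · refine weaken hd3 ?_
        intro x hx
        by_cases hxψ : x = ψ
        · exact hxψ ▸ Set.mem_insert _ _
        · exact Set.mem_insert_of_mem _ (Or.inr ⟨hx, hxψ⟩)
  | @tensorSub Γ φ ψ χ _ _ ih1 ih2 =>
    obtain ⟨Δ₁, hs1, hf1, hd1⟩ := ih1
    obtain ⟨Δ₂, hs2, hf2, hd2⟩ := ih2
    refine ⟨Δ₁ ∪ (Δ₂ \ {ψ}), ?_, hf1.union hf2.diff, ?_⟩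
    · intro x hx
      rcases hx with hx | hx
      · exact hs1 hx
      · rcases hs2 hx.1 with rfl | h
        · exact absurd rfl hx.2
        · exact h
    · refine ND.tensorSub (weaken hd1 Set.subset_union_left) ?_
      refine weaken hd2 ?_
      intro x hx
      by_cases hxψ : x = ψ
      · exact hxψ ▸ Set.mem_insert _ _
      · exact Set.mem_insert_of_mem _ (Or.inr ⟨hx, hxψ⟩)
  | tensorComm _ ih =>
    obtain ⟨Δ, hs, hf, hd⟩ := ih; exact ⟨Δ, hs, hf, ND.tensorComm hd⟩
  | tensorAssoc _ ih =>
    obtain ⟨Δ, hs, hf, hd⟩ := ih; exact ⟨Δ, hs, hf, ND.tensorAssoc hd⟩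
  | depI αs β _ ih =>
    obtain ⟨Δ, hs, hf, hd⟩ := ih; exact ⟨Δ, hs, hf, ND.depI αs β hd⟩
  | depE αs β _ ih =>
    obtain ⟨Δ, hs, hf, hd⟩ := ih; exact ⟨Δ, hs, hf, ND.depE αs β hd⟩
  | @negI Γ α _ ih =>
    obtain ⟨Δ, hs, hf, hd⟩ := ih
    refine ⟨Δ \ {α.toMDV}, ?_, hf.diff, ?_⟩
    · intro x hx
      rcases hs hx.1 with rfl | h
      · exact absurd rfl hx.2
      · exact h
    · refine ND.negI α (weaken hd ?_)
      intro x hx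
      by_cases hxα : x = α.toMDV
      · exact hxα ▸ Set.mem_insert _ _
      · exact Set.mem_insert_of_mem _ ⟨hx, hxα⟩
  | negE α _ _ ih1 ih2 =>
    obtain ⟨Δ₁, hs1, hf1, hd1⟩ := ih1
    obtain ⟨Δ₂, hs2, hf2, hd2⟩ := ih2
    exact ⟨Δ₁ ∪ Δ₂, Set.union_subset hs1 hs2, hf1.union hf2,
      ND.negE α (weaken hd1 Set.subset_union_left) (weaken hd2 Set.subset_union_right)⟩
  | diaMon _ h2 ih1 _ =>
    obtain ⟨Δ, hs, hf, hd⟩ := ih1; exact ⟨Δ, hs, hf, ND.diaMon hd h2⟩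
  | interDiaBox α _ ih =>
    obtain ⟨Δ, hs, hf, hd⟩ := ih; exact ⟨Δ, hs, hf, ND.interDiaBox α hd⟩

theorem cutList {Γ : Set MDVForm} {ψ : MDVForm} :
    ∀ L : List MDVForm, ND ({χ | χ ∈ L} ∪ Γ) ψ → (∀ χ ∈ L, ND Γ χ) → ND Γ ψ := by
  intro L
  induction L with
  | nil =>
    intro h _
    have he : {χ : MDVForm | χ ∈ ([] : List MDVForm)} ∪ Γ = Γ := by simp
    rwa [he] at h
  | cons χ T ih =>
    intro h hall
    have h' : ND (insert χ ({x | x ∈ T} ∪ Γ)) ψ := by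
      refine weaken h ?_
      intro x hx
      rcases hx with hx | hx
      · rcases List.mem_cons.1 hx with rfl | hx
        · exact Set.mem_insert _ _
        · exact Set.mem_insert_of_mem _ (Or.inl hx)
      · exact Set.mem_insert_of_mem _ (Or.inr hx)
    have hχ : ND ({x | x ∈ T} ∪ Γ) χ :=
      weaken (hall χ List.mem_cons_self) Set.subset_union_right
    exact ih (cut hχ h') fun x hx => hall x (List.mem_cons_of_mem _ hx)

theorem cutSet {Γ Δ : Set MDVForm} {ψ : MDVForm} (h : ND Δ ψ)
    (hall : ∀ χ ∈ Δ, ND Γ χ) : ND Γ ψ := by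
  obtain ⟨Δ₀, hsub, hfin, hd⟩ := finite_premises h
  have hset : {χ | χ ∈ hfin.toFinset.toList} = Δ₀ := by
    ext x; simp
  refine cutList hfin.toFinset.toList (weaken hd ?_) ?_
  · rw [hset]; exact Set.subset_union_left
  · intro χ hχ
    apply hall
    apply hsub
    rw [← hset]
    exact hχ

end ND
/-- Disjunction of a list of formulas. -/
def bigOr : List MDVForm → MDVForm
  | [] => .bot
  | [φ] => φ
  | φ :: ψ :: χs => .or φ (bigOr (ψ :: χs))

namespace ND

theorem bigOr_intro {Γ : Set MDVForm} :
    ∀ {l : List MDVForm} {φ : MDVForm}, φ ∈ l → ND Γ φ → ND Γ (bigOr l)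
  | [], φ, h, _ => absurd h List.not_mem_nil
  | [x], φ, h, hd => by
    rcases List.mem_singleton.1 h with rfl
    exact hd
  | x :: y :: T, φ, h, hd => by
    rcases List.mem_cons.1 h with rfl | h
    · exact ND.orI1 hd
    · exact ND.orI2 (bigOr_intro h hd)

theorem bigOr_elim {χ : MDVForm} :
    ∀ {l : List MDVForm} {Γ : Set MDVForm}, l ≠ [] → ND Γ (bigOr l) →
      (∀ φ ∈ l, ND (insert φ Γ) χ) → ND Γ χ
  | [], _, h, _, _ => absurd rfl h
  | [x], _, _, hd, hall => ND.cut hd (hall x (by simp))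
  | x :: y :: T, Γ, _, hd, hall => by
    refine ND.orE hd (hall x (by simp)) ?_
    refine bigOr_elim (l := y :: T) (by simp) (ND.hyp (Set.mem_insert _ _)) ?_
    intro φ hφ
    exact ND.weaken (hall φ (by simp [hφ]))
      (Set.insert_subset_insert (Set.subset_insert _ _))

theorem tensor_bigOr {φ : MDVForm} :
    ∀ {l : List MDVForm} {Γ : Set MDVForm}, l ≠ [] → ND Γ (φ.tensor (bigOr l)) →
      ND Γ (bigOr (l.map (MDVForm.tensor φ)))
  | [], _, h, _ => absurd rfl h
  | [x], _, _, hd => hd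
  | x :: y :: T, Γ, _, hd => by
    have h1 : ND Γ ((φ.tensor x).or (φ.tensor (bigOr (y :: T)))) := ND.distrTensorOr hd
    refine ND.orE h1 ?_ ?_
    · exact ND.orI1 (ND.hyp (Set.mem_insert _ _))
    · exact ND.orI2 (tensor_bigOr (by simp) (ND.hyp (Set.mem_insert _ _)))

theorem box_bigOr :
    ∀ {l : List MDVForm} {Γ : Set MDVForm}, l ≠ [] → ND Γ (.box (bigOr l)) →
      ND Γ (bigOr (l.map MDVForm.box))
  | [], _, h, _ => absurd rfl h
  | [x], _, _, hd => hd
  | x :: y :: T, Γ, _, hd => by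
    have h1 : ND Γ ((MDVForm.box x).or (.box (bigOr (y :: T)))) := ND.distrBoxOr hd
    refine ND.orE h1 ?_ ?_
    · exact ND.orI1 (ND.hyp (Set.mem_insert _ _))
    · exact ND.orI2 (box_bigOr (by simp) (ND.hyp (Set.mem_insert _ _)))

theorem dia_bigOr :
    ∀ {l : List MDVForm} {Γ : Set MDVForm}, l ≠ [] → ND Γ (.dia (bigOr l)) →
      ND Γ (bigOr (l.map MDVForm.dia))
  | [], _, h, _ => absurd rfl h
  | [x], _, _, hd => hd
  | x :: y :: T, Γ, _, hd => by
    have h1 : ND Γ ((MDVForm.dia x).or (.dia (bigOr (y :: T)))) := ND.distrDiaOr hd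
    refine ND.orE h1 ?_ ?_
    · exact ND.orI1 (ND.hyp (Set.mem_insert _ _))
    · exact ND.orI2 (dia_bigOr (by simp) (ND.hyp (Set.mem_insert _ _)))

end ND
section DepSemantics

attribute [local instance] Classical.propDecidable

theorem CForm.ne_neg : ∀ α : CForm, CForm.neg α ≠ α := by
  intro α
  induction α with
  | var p => exact fun h => CForm.noConfusion h
  | bot => exact fun h => CForm.noConfusion h
  | neg γ ih => intro h; injection h with h'; exact ih h'
  | and a b iha ihb => exact fun h => CForm.noConfusion h
  | tensor a b iha ihb => exact fun h => CForm.noConfusion h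
  | box a ih => exact fun h => CForm.noConfusion h
  | dia a ih => exact fun h => CForm.noConfusion h

theorem toMDV_ne_cneg (α : CForm) : α.toMDV ≠ MDVForm.cneg α := by
  cases α <;> simp [CForm.toMDV]
  intro h
  exact CForm.ne_neg _ h.symm

theorem signed_inj {b b' : Bool} {α : CForm} (h : signed b α = signed b' α) : b = b' := by
  cases b <;> cases b' <;> simp [signed] at h ⊢
  · exact absurd h.symm (toMDV_ne_cneg α)
  · exact absurd h (toMDV_ne_cneg α)

theorem bigAnd_inj : ∀ l₁ l₂ : List MDVForm, l₁.length = l₂.length →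
    bigAnd l₁ = bigAnd l₂ → l₁ = l₂
  | [], [], _, _ => rfl
  | [x], [y], _, h => by rw [show x = y from h]
  | [x], y :: z :: T, hl, _ => by simp at hl
  | x :: z :: T, [y], hl, _ => by simp at hl
  | x :: x' :: T, y :: y' :: S, hl, h => by
    have h' : MDVForm.and x (bigAnd (x' :: T)) = MDVForm.and y (bigAnd (y' :: S)) := h
    injection h' with h1 h2
    have h3 := bigAnd_inj (x' :: T) (y' :: S) (by simpa using hl) h2
    rw [h1, h3]
  | [], y :: S, hl, _ => by simp at hl
  | x :: T, [], hl, _ => by simp at hl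

end DepSemantics
section DepSemantics2

attribute [local instance] Classical.propDecidable

theorem allVecs_mem : ∀ (n : ℕ) (v : List Bool), v ∈ allVecs n ↔ v.length = n
  | 0, v => by simp [allVecs, List.length_eq_zero_iff]
  | n + 1, v => by
    simp only [allVecs, List.mem_append, List.mem_map]
    constructor
    · rintro (⟨w, hw, rfl⟩ | ⟨w, hw, rfl⟩) <;> simp [(allVecs_mem n w).1 hw]
    · intro hlen
      match v, hlen with
      | b :: w, hlen =>
        have hw : w.length = n := by simpa using hlen
        cases b
        · exact Or.inr ⟨w, (allVecs_mem n w).2 hw, rfl⟩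
        · exact Or.inl ⟨w, (allVecs_mem n w).2 hw, rfl⟩

theorem allVecs_ne_nil (n : ℕ) : allVecs n ≠ [] :=
  List.ne_nil_of_mem ((allVecs_mem n (List.replicate n true)).2 (by simp))

theorem allVecs_nodup : ∀ n : ℕ, (allVecs n).Nodup
  | 0 => by simp [allVecs]
  | n + 1 => by
    simp only [allVecs]
    refine List.Nodup.append ?_ ?_ ?_
    · refine List.Nodup.map ?_ (allVecs_nodup n)
      intro a b h
      injection h
    · refine List.Nodup.map ?_ (allVecs_nodup n)
      intro a b h
      injection h
    · intro v hv hv'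
      simp only [List.mem_map] at hv hv'
      obtain ⟨w, _, rfl⟩ := hv
      obtain ⟨w', _, h⟩ := hv'
      exact Bool.noConfusion (List.cons.inj h.symm).1

/-- depRow is injective on vectors of the right length. -/
theorem depRow_inj {αs : List CForm} {β : CForm} {v v' : List Bool}
    (hv : v.length = αs.length) (hv' : v'.length = αs.length)
    (h : depRow αs β v = depRow αs β v') : v = v' := by
  unfold depRow at h
  have hlen : (List.zipWith signed v αs ++ [MDVForm.or β.toMDV (.cneg β)]).length
      = (List.zipWith signed v' αs ++ [MDVForm.or β.toMDV (.cneg β)]).length := by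
    simp [List.length_zipWith, hv, hv']
  have := bigAnd_inj _ _ hlen h
  have hz : List.zipWith signed v αs = List.zipWith signed v' αs :=
    List.append_inj_left this (by simp [List.length_zipWith, hv, hv'])
  refine List.ext_getElem (by rw [hv, hv']) ?_
  intro n h₁ h₂
  have hn : n < (List.zipWith signed v αs).length := by
    simp [List.length_zipWith, hv, hv']; omega
  have hn' : n < (List.zipWith signed v' αs).length := by
    simp [List.length_zipWith, hv, hv']; omega
  have := congrArg (fun l => l[n]?) hz
  simp only [List.getElem?_eq_getElem hn, List.getElem?_eq_getElem hn'] at this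
  rw [List.getElem_zipWith, List.getElem_zipWith] at this
  exact signed_inj (Option.some.inj this)

theorem sat_bigAnd {M : KModel} {X : Set M.W} :
    ∀ {l : List MDVForm}, l ≠ [] → (M.sat X (bigAnd l) ↔ ∀ φ ∈ l, M.sat X φ)
  | [], h => absurd rfl h
  | [x], _ => by simp [bigAnd]
  | x :: y :: T, _ => by
    have ih := sat_bigAnd (M := M) (X := X) (l := y :: T) (by simp)
    show M.sat X (MDVForm.and x (bigAnd (y :: T))) ↔ _
    simp only [KModel.sat]
    constructor
    · rintro ⟨h1, h2⟩ φ hφ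
      rcases List.mem_cons.1 hφ with rfl | hφ
      · exact h1
      · exact ih.1 h2 φ hφ
    · intro h
      exact ⟨h x (by simp), ih.2 fun φ hφ => h φ (by simp [hφ])⟩

/-- Bounded union of teams. -/
def bUnion {M : KModel} (n : ℕ) (f : ℕ → Set M.W) : Set M.W :=
  {u | ∃ i, i < n ∧ u ∈ f i}

theorem sat_bigTensor_intro {M : KModel} :
    ∀ (l : List MDVForm) (f : ℕ → Set M.W),
      (∀ i (h : i < l.length), M.sat (f i) l[i]) →
        M.sat (bUnion l.length f) (bigTensor l)
  | [], f, _ => by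
    have h0 : bUnion (M := M) ([] : List MDVForm).length f = ∅ := by
      ext u; simp [bUnion]
    rw [h0]; exact KModel.sat_empty _
  | [x], f, h => by
    have h0 : bUnion (M := M) [x].length f = f 0 := by
      ext u
      simp only [bUnion, List.length_singleton, Set.mem_setOf_eq]
      constructor
      · rintro ⟨i, hi, hu⟩
        have : i = 0 := by omega
        subst this; exact hu
      · intro hu; exact ⟨0, by omega, hu⟩
    rw [h0]
    exact h 0 (by simp)
  | x :: y :: T, f, h => by
    refine ⟨f 0, bUnion (y :: T).length (fun i => f (i + 1)), ?_, h 0 (by simp), ?_⟩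
    · ext u
      simp only [Set.mem_union, bUnion, Set.mem_setOf_eq, List.length_cons]
      constructor
      · rintro ⟨i, hi, hu⟩
        match i with
        | 0 => exact Or.inl hu
        | j + 1 => exact Or.inr ⟨j, by omega, hu⟩
      · rintro (hu | ⟨j, hj, hu⟩)
        · exact ⟨0, by omega, hu⟩
        · exact ⟨j + 1, by omega, hu⟩
    · exact sat_bigTensor_intro (y :: T) (fun i => f (i + 1))
        (fun i hi => h (i + 1) (by simpa using hi))

theorem sat_bigTensor_elim {M : KModel} :
    ∀ {l : List MDVForm} {X : Set M.W}, l ≠ [] → M.sat X (bigTensor l) →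
      ∃ f : ℕ → Set M.W, X = bUnion l.length f ∧ ∀ i (h : i < l.length), M.sat (f i) l[i]
  | [], _, h, _ => absurd rfl h
  | [x], X, _, h => by
    refine ⟨fun _ => X, ?_, ?_⟩
    · ext u
      simp only [bUnion, List.length_singleton, Set.mem_setOf_eq]
      exact ⟨fun hu => ⟨0, by omega, hu⟩, fun ⟨i, _, hu⟩ => hu⟩
    · intro i hi
      have : i = 0 := by simp at hi; omega
      subst this
      exact h
  | x :: y :: T, X, _, h => by
    obtain ⟨Y, Z, rfl, hY, hZ⟩ := h
    obtain ⟨g, rfl, hg⟩ := sat_bigTensor_elim (l := y :: T) (by simp) hZ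
    refine ⟨fun i => match i with | 0 => Y | j + 1 => g j, ?_, ?_⟩
    · ext u
      simp only [Set.mem_union, bUnion, Set.mem_setOf_eq, List.length_cons]
      constructor
      · rintro (hu | ⟨j, hj, hu⟩)
        · exact ⟨0, by omega, hu⟩
        · exact ⟨j + 1, by omega, hu⟩
      · rintro ⟨i, hi, hu⟩
        match i with
        | 0 => exact Or.inl hu
        | j + 1 => exact Or.inr ⟨j, by omega, hu⟩
    · intro i hi
      match i with
      | 0 => exact hY
      | j + 1 => exact hg j (by simpa using hi)

/-- The truth pattern of a world for a list of classical formulas. -/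
noncomputable def patt (M : KModel) (w : M.W) (αs : List CForm) : List Bool :=
  αs.map fun α => decide (M.csat {w} α)

theorem patt_length (M : KModel) (w : M.W) (αs : List CForm) :
    (patt M w αs).length = αs.length := by simp [patt]

theorem patt_eq_iff {M : KModel} {w u : M.W} {αs : List CForm} :
    patt M w αs = patt M u αs ↔ ∀ α ∈ αs, (M.csat {w} α ↔ M.csat {u} α) := by
  unfold patt
  rw [List.map_inj_left]
  constructor
  · intro h α hα; exact decide_eq_decide.1 (h α hα)
  · intro h α hα; exact decide_eq_decide.2 (h α hα)

end DepSemantics2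
section MainSemantics

attribute [local instance] Classical.propDecidable

theorem row_pattern {M : KModel} {Y : Set M.W} {αs : List CForm} {β : CForm}
    {v : List Bool} (hv : v.length = αs.length) (hY : M.sat Y (depRow αs β v)) :
    (∀ w ∈ Y, patt M w αs = v) ∧
      (M.csat Y β ∨ ∀ w ∈ Y, ¬ M.csat {w} β) := by
  unfold depRow at hY
  have hall := (sat_bigAnd (by simp)).1 hY
  constructor
  · intro w hw
    refine List.ext_getElem (by rw [patt_length, hv]) ?_
    intro n h₁ h₂
    have hn : n < (List.zipWith signed v αs).length := by
      simp only [List.length_zipWith]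
      simp only [patt_length] at h₁
      omega
    have hmem : signed v[n] αs[n] ∈ List.zipWith signed v αs ++
        [MDVForm.or β.toMDV (.cneg β)] := by
      refine List.mem_append_left _ ?_
      rw [← List.getElem_zipWith (h := hn)]
      exact List.getElem_mem hn
    have hs := hall _ hmem
    have hpattn : (patt M w αs)[n] = decide (M.csat {w} αs[n]) := by
      simp [patt]
    rw [hpattn]
    rcases hb : v[n] with _ | _
    · rw [hb] at hs
      have : ∀ x ∈ Y, ¬ M.csat {x} αs[n] := hs
      simp [this w hw]
    · rw [hb] at hs
      have : M.csat Y αs[n] := (KModel.sat_toMDV _ _).1 hs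
      simp [(M.csat_flat αs[n] Y).1 this w hw]
  · have hor := hall (MDVForm.or β.toMDV (.cneg β))
      (List.mem_append_right _ (List.mem_singleton.2 rfl))
    rcases hor with h | h
    · exact Or.inl ((KModel.sat_toMDV _ _).1 h)
    · exact Or.inr h

theorem sat_depTensor_iff {M : KModel} {X : Set M.W} (αs : List CForm) (β : CForm) :
    M.sat X (depTensor αs β) ↔ M.sat X (.dep αs β) := by
  set k := αs.length with hk
  set L := (allVecs k).map (depRow αs β) with hL
  have hLlen : L.length = (allVecs k).length := by simp [hL]
  have hLne : L ≠ [] := fun h => allVecs_ne_nil k (by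
    have hh := congrArg List.length h
    simp only [hL, List.length_map, List.length_nil] at hh
    exact List.length_eq_zero_iff.1 hh)
  have hgetL : ∀ (i : ℕ) (hi : i < L.length),
      L[i] = depRow αs β ((allVecs k)[i]'(hLlen ▸ hi)) := by
    intro i hi
    simp [hL]
  constructor
  · intro h
    obtain ⟨f, hX, hf⟩ := sat_bigTensor_elim hLne h
    intro w hw u hu hiff
    rw [hX] at hw hu
    obtain ⟨iw, hiw, hwf⟩ := hw
    obtain ⟨iu, hiu, huf⟩ := hu
    have hiw' : iw < (allVecs k).length := by omega
    have hiu' : iu < (allVecs k).length := by omega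
    have hleniw : ((allVecs k)[iw]'hiw').length = αs.length :=
      (allVecs_mem k _).1 (List.getElem_mem hiw')
    have hleniu : ((allVecs k)[iu]'hiu').length = αs.length :=
      (allVecs_mem k _).1 (List.getElem_mem hiu')
    have hrw := row_pattern hleniw (by rw [← hgetL iw hiw]; exact hf iw hiw)
    have hru := row_pattern hleniu (by rw [← hgetL iu hiu]; exact hf iu hiu)
    have hpw : patt M w αs = (allVecs k)[iw]'hiw' := hrw.1 w hwf
    have hpu : patt M u αs = (allVecs k)[iu]'hiu' := hru.1 u huf
    have hvv : (allVecs k)[iw]'hiw' = (allVecs k)[iu]'hiu' := by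
      rw [← hpw, ← hpu]
      exact patt_eq_iff.2 hiff
    have hieq : iw = iu := ((allVecs_nodup k).getElem_inj_iff).1 hvv
    subst hieq
    rcases hrw.2 with hβ | hβ
    · constructor <;> intro _
      · exact (M.csat_flat β _).1 hβ u huf
      · exact (M.csat_flat β _).1 hβ w hwf
    · constructor <;> intro hc
      · exact absurd hc (hβ w hwf)
      · exact absurd hc (hβ u huf)
  · intro hdep
    have hXeq : X = bUnion L.length fun i =>
        if hi : i < (allVecs k).length then
          {w ∈ X | patt M w αs = (allVecs k)[i]'hi} else ∅ := by
      ext w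
      simp only [bUnion, Set.mem_setOf_eq]
      constructor
      · intro hw
        have hmem : patt M w αs ∈ allVecs k :=
          (allVecs_mem k _).2 (patt_length M w αs)
        obtain ⟨i, hi, hieq⟩ := List.mem_iff_getElem.1 hmem
        refine ⟨i, by omega, ?_⟩
        rw [dif_pos hi]
        exact ⟨hw, hieq.symm⟩
      · rintro ⟨i, hi, hw⟩
        rw [dif_pos (by omega : i < (allVecs k).length)] at hw
        exact hw.1
    rw [hXeq]
    apply sat_bigTensor_intro
    intro i hi
    have hi' : i < (allVecs k).length := by omega
    rw [hgetL i hi, dif_pos hi']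
    set v := (allVecs k)[i]'hi' with hv
    have hvlen : v.length = αs.length := (allVecs_mem k _).1 (List.getElem_mem hi')
    set Y := {w ∈ X | patt M w αs = v} with hYdef
    have hpatY : ∀ w ∈ Y, ∀ (n : ℕ) (hn : n < αs.length),
        decide (M.csat {w} αs[n]) = v[n]'(by omega) := by
      intro w hw n hn
      have : (patt M w αs)[n]'(by rw [patt_length]; exact hn) = v[n]'(by omega) := by
        have := hw.2
        simp only [this]
      rw [← this]
      simp [patt]
    unfold depRow
    refine (sat_bigAnd (by simp)).2 ?_
    intro ψ hψ
    rcases List.mem_append.1 hψ with hψ | hψ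
    · obtain ⟨n, hn, hψeq⟩ := List.mem_iff_getElem.1 hψ
      have hn' : n < αs.length := by
        simp only [List.length_zipWith] at hn
        omega
      rw [List.getElem_zipWith] at hψeq
      subst hψeq
      rcases hb : v[n]'(by omega) with _ | _
      · intro w hw
        have := hpatY w hw n hn'
        rw [hb] at this
        simpa using this
      · refine (KModel.sat_toMDV _ _).2 ((M.csat_flat _ _).2 ?_)
        intro w hw
        have := hpatY w hw n hn'
        rw [hb] at this
        simpa using this
    · rw [List.mem_singleton.1 hψ]
      by_cases hc : ∃ w₀ ∈ Y, M.csat {w₀} β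
      · obtain ⟨w₀, hw₀, hβ⟩ := hc
        left
        refine (KModel.sat_toMDV _ _).2 ((M.csat_flat _ _).2 ?_)
        intro u hu
        have hiff : ∀ α ∈ αs, (M.csat {w₀} α ↔ M.csat {u} α) :=
          patt_eq_iff.1 (by rw [hw₀.2, hu.2])
        exact (hdep w₀ hw₀.1 u hu.1 hiff).1 hβ
      · right
        intro u hu hβ
        exact hc ⟨u, hu, hβ⟩

end MainSemantics
theorem ND.soundness {Γ : Set MDVForm} {φ : MDVForm} (h : ND Γ φ) :
    SetEntails Γ φ := by
  induction h with
  | hyp h => exact fun M X hX => hX _ h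
  | andI _ _ ih1 ih2 => exact fun M X hX => ⟨ih1 M X hX, ih2 M X hX⟩
  | andE1 _ ih => exact fun M X hX => (ih M X hX).1
  | andE2 _ ih => exact fun M X hX => (ih M X hX).2
  | dne α _ ih =>
    intro M X hX
    have h := ih M X hX
    refine (KModel.sat_toMDV _ _).2 ((M.csat_flat _ _).2 ?_)
    intro w hw
    by_contra hc
    refine h w hw ?_
    intro u hu
    rw [Set.mem_singleton_iff] at hu
    subst hu
    exact hc
  | exfalso _ ih =>
    intro M X hX
    have h : X = ∅ := ih M X hX
    rw [h]; exact M.sat_empty _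
  | boxMon l _ _ ih1 ih2 =>
    intro M X hX
    exact ih2 M (M.img X) fun χ hχ => ih1 χ hχ M X hX
  | interBoxDia α _ ih =>
    intro M X hX
    have h := ih M X hX
    refine ⟨{u ∈ M.img X | ¬ M.csat {u} α}, ⟨fun u hu => hu.1, ?_⟩, fun u hu => hu.2⟩
    intro w hw
    have hw' : ¬ M.csat (M.img {w}) α := h w hw
    have : ¬ ∀ u ∈ M.img {w}, M.csat {u} α := fun hc => hw' ((M.csat_flat _ _).2 hc)
    push_neg at this
    obtain ⟨u, hu, hcu⟩ := this
    obtain ⟨v, hv, hR⟩ := hu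
    rw [Set.mem_singleton_iff] at hv
    subst hv
    exact ⟨u, ⟨⟨_, hw, hR⟩, hcu⟩, hR⟩
  | orI1 _ ih => exact fun M X hX => Or.inl (ih M X hX)
  | orI2 _ ih => exact fun M X hX => Or.inr (ih M X hX)
  | orE _ _ _ ih1 ih2 ih3 =>
    intro M X hX
    rcases ih1 M X hX with h | h
    · refine ih2 M X ?_
      rintro γ (rfl | hγ)
      · exact h
      · exact hX γ hγ
    · refine ih3 M X ?_
      rintro γ (rfl | hγ)
      · exact h
      · exact hX γ hγ
  | distrTensorOr _ ih =>
    intro M X hX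
    obtain ⟨Y, Z, rfl, hY, hZ⟩ := ih M X hX
    rcases hZ with hZ | hZ
    · exact Or.inl ⟨Y, Z, rfl, hY, hZ⟩
    · exact Or.inr ⟨Y, Z, rfl, hY, hZ⟩
  | distrDiaOr _ ih =>
    intro M X hX
    obtain ⟨Y, hsucc, hY⟩ := ih M X hX
    rcases hY with hY | hY
    · exact Or.inl ⟨Y, hsucc, hY⟩
    · exact Or.inr ⟨Y, hsucc, hY⟩
  | distrBoxOr _ ih =>
    intro M X hX
    rcases ih M X hX with h | h
    · exact Or.inl h
    · exact Or.inr h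
  | tensorI ψ _ ih =>
    exact fun M X hX => ⟨X, ∅, (Set.union_empty X).symm, ih M X hX, M.sat_empty _⟩
  | tensorE α _ _ _ ih1 ih2 ih3 =>
    intro M X hX
    obtain ⟨Y, Z, rfl, hY, hZ⟩ := ih1 M X hX
    have hYα : M.csat Y α := by
      refine (KModel.sat_toMDV _ _).1 (ih2 M Y ?_)
      rintro γ (rfl | hγ)
      · exact hY
      · exact M.sat_mono γ _ Y Set.subset_union_left (hX γ hγ)
    have hZα : M.csat Z α := by
      refine (KModel.sat_toMDV _ _).1 (ih3 M Z ?_)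
      rintro γ (rfl | hγ)
      · exact hZ
      · exact M.sat_mono γ _ Z Set.subset_union_right (hX γ hγ)
    refine (KModel.sat_toMDV _ _).2 ((M.csat_flat _ _).2 ?_)
    rintro w (hw | hw)
    · exact (M.csat_flat _ _).1 hYα w hw
    · exact (M.csat_flat _ _).1 hZα w hw
  | tensorSub _ _ ih1 ih2 =>
    intro M X hX
    obtain ⟨Y, Z, rfl, hY, hZ⟩ := ih1 M X hX
    refine ⟨Y, Z, rfl, hY, ih2 M Z ?_⟩
    rintro γ (rfl | hγ)
    · exact hZ
    · exact M.sat_mono γ _ Z Set.subset_union_right (hX γ hγ)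
  | tensorComm _ ih =>
    intro M X hX
    obtain ⟨Y, Z, hXYZ, hY, hZ⟩ := ih M X hX
    exact ⟨Z, Y, by rw [hXYZ, Set.union_comm], hZ, hY⟩
  | tensorAssoc _ ih =>
    intro M X hX
    obtain ⟨Y, W, hXYW, hY, ⟨Z, V, hWZV, hZ, hV⟩⟩ := ih M X hX
    exact ⟨Y ∪ Z, V, by rw [hXYW, hWZV, Set.union_assoc], ⟨Y, Z, rfl, hY, hZ⟩, hV⟩
  | depI αs β _ ih =>
    exact fun M X hX => (sat_depTensor_iff αs β).1 (ih M X hX)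
  | depE αs β _ ih =>
    exact fun M X hX => (sat_depTensor_iff αs β).2 (ih M X hX)
  | negI α _ ih =>
    intro M X hX w hw hcsat
    have h : M.sat {w} MDVForm.bot := by
      refine ih M {w} ?_
      rintro γ (rfl | hγ)
      · exact (KModel.sat_toMDV _ _).2 hcsat
      · exact M.sat_mono γ X {w} (Set.singleton_subset_iff.2 hw) (hX γ hγ)
    exact Set.singleton_ne_empty w h
  | negE α _ _ ih1 ih2 =>
    intro M X hX
    have h1 : M.csat X α := (KModel.sat_toMDV _ _).1 (ih1 M X hX)
    have h2 := ih2 M X hX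
    show X = ∅
    rw [Set.eq_empty_iff_forall_notMem]
    intro w hw
    exact h2 w hw ((M.csat_flat _ _).1 h1 w hw)
  | diaMon _ _ ih1 ih2 =>
    intro M X hX
    obtain ⟨Y, hsucc, hY⟩ := ih1 M X hX
    refine ⟨Y, hsucc, ih2 M Y ?_⟩
    rintro γ hγ
    rw [Set.mem_singleton_iff] at hγ
    subst hγ
    exact hY
  | interDiaBox α _ ih =>
    intro M X hX
    obtain ⟨Y, ⟨hsub, hsucc⟩, hcne⟩ := ih M X hX
    intro w hw hc
    obtain ⟨u, hu, hR⟩ := hsucc w hw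
    have hc' : M.csat (M.img {w}) α := hc
    exact hcne u hu ((M.csat_flat _ _).1 hc' u (show u ∈ M.img {w} from ⟨w, rfl, hR⟩))
section Canonical

/-- Inverse of the embedding. -/
def fromMDV : MDVForm → CForm
  | .var p => .var p
  | .bot => .bot
  | .cneg γ => .neg γ
  | .dep _ β => .bot
  | .and a b => .and (fromMDV a) (fromMDV b)
  | .tensor a b => .tensor (fromMDV a) (fromMDV b)
  | .or _ _ => .bot
  | .box a => .box (fromMDV a)
  | .dia a => .dia (fromMDV a)

theorem fromMDV_toMDV : ∀ α : CForm, fromMDV α.toMDV = α := by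
  intro α
  induction α with
  | var p => rfl
  | bot => rfl
  | neg γ => rfl
  | and a b iha ihb => simp [CForm.toMDV, fromMDV, iha, ihb]
  | tensor a b iha ihb => simp [CForm.toMDV, fromMDV, iha, ihb]
  | box a ih => simp [CForm.toMDV, fromMDV, ih]
  | dia a ih => simp [CForm.toMDV, fromMDV, ih]

theorem toMDV_injective : Function.Injective CForm.toMDV := by
  intro a b h
  rw [← fromMDV_toMDV a, ← fromMDV_toMDV b, h]

/-- Consistency of a set of classical formulas. -/
def CCon (Δ : Set CForm) : Prop := ¬ ND (CForm.toMDV '' Δ) MDVForm.bot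

/-- Maximal consistent sets of classical formulas. -/
def CMCS (w : Set CForm) : Prop := CCon w ∧ ∀ α : CForm, α ∉ w → ¬ CCon (insert α w)

theorem CCon.mono {Δ Θ : Set CForm} (h : CCon Θ) (hsub : Δ ⊆ Θ) : CCon Δ :=
  fun hd => h (ND.weaken hd (Set.image_mono hsub))

theorem finite_subset_chain {γ : Type*} {c : Set (Set γ)} (hc : IsChain (· ⊆ ·) c)
    (hne : c.Nonempty) {B : Set γ} (hB : B.Finite) :
    B ⊆ ⋃₀ c → ∃ t ∈ c, B ⊆ t := by
  refine Set.Finite.induction_on (motive := fun B _ => B ⊆ ⋃₀ c → ∃ t ∈ c, B ⊆ t) B hB ?_ ?_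
  · exact fun _ => ⟨hne.choose, hne.choose_spec, Set.empty_subset _⟩
  · intro x B hxB hBfin ih hsub
    obtain ⟨t₁, ht₁, hBt₁⟩ := ih (fun y hy => hsub (Set.mem_insert_of_mem _ hy))
    obtain ⟨t₂, ht₂, hxt₂⟩ := hsub (Set.mem_insert x B)
    rcases hc.total ht₁ ht₂ with h12 | h21
    · exact ⟨t₂, ht₂, Set.insert_subset hxt₂ (subset_trans hBt₁ h12)⟩
    · exact ⟨t₁, ht₁, Set.insert_subset (h21 hxt₂) hBt₁⟩

theorem lindenbaum {Δ : Set CForm} (h : CCon Δ) : ∃ w, Δ ⊆ w ∧ CMCS w := by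
  have hZ : ∀ c ⊆ {Θ : Set CForm | CCon Θ}, IsChain (· ⊆ ·) c → c.Nonempty →
      ∃ ub ∈ {Θ : Set CForm | CCon Θ}, ∀ s ∈ c, s ⊆ ub := by
    intro c hcS hchain hcne
    refine ⟨⋃₀ c, ?_, fun s hs => Set.subset_sUnion_of_mem hs⟩
    intro hd
    obtain ⟨Δ₀, hsub, hfin, hd₀⟩ := ND.finite_premises hd
    set B : Set CForm := {δ ∈ ⋃₀ c | δ.toMDV ∈ Δ₀} with hB
    have hBfin : B.Finite := by
      refine Set.Finite.subset
        (Set.Finite.preimage (f := CForm.toMDV)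
          (Set.injOn_of_injective toMDV_injective) hfin) ?_
      intro x hx; exact hx.2
    have hBsub : B ⊆ ⋃₀ c := fun x hx => hx.1
    obtain ⟨t, htc, hBt⟩ := finite_subset_chain hchain hcne hBfin hBsub
    refine hcS htc ?_
    refine ND.weaken hd₀ ?_
    intro x hx
    obtain ⟨δ, hδ, rfl⟩ := hsub hx
    have hδB : δ ∈ B := ⟨hδ, hx⟩
    exact Set.mem_image_of_mem _ (hBt hδB)
  obtain ⟨m, hΔm, hmax⟩ := zorn_subset_nonempty {Θ : Set CForm | CCon Θ} hZ Δ h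
  refine ⟨m, hΔm, hmax.1, ?_⟩
  intro α hα hcon
  have hsub := hmax.2 hcon (Set.subset_insert α m)
  exact hα (hsub (Set.mem_insert α m))

theorem CMCS.con {w : Set CForm} (hw : CMCS w) : CCon w := hw.1

theorem CMCS.prov_mem {w : Set CForm} (hw : CMCS w) {α : CForm}
    (h : ND (CForm.toMDV '' w) α.toMDV) : α ∈ w := by
  by_contra hα
  have hnc := hw.2 α hα
  rw [CCon, not_not] at hnc
  rw [Set.image_insert_eq] at hnc
  exact hw.1 (ND.cut h hnc)

theorem CMCS.mem_hyp {w : Set CForm} {α : CForm} (h : α ∈ w) :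
    ND (CForm.toMDV '' w) α.toMDV :=
  ND.hyp (Set.mem_image_of_mem _ h)

theorem CMCS.neg_mem_iff {w : Set CForm} (hw : CMCS w) {α : CForm} :
    CForm.neg α ∈ w ↔ α ∉ w := by
  constructor
  · intro hneg hα
    exact hw.1 (ND.negE α (CMCS.mem_hyp hα) (CMCS.mem_hyp hneg))
  · intro hα
    have hnc := hw.2 α hα
    rw [CCon, not_not, Set.image_insert_eq] at hnc
    exact hw.prov_mem (ND.negI α hnc)

theorem CMCS.bot_not_mem {w : Set CForm} (hw : CMCS w) : CForm.bot ∉ w := by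
  intro h
  exact hw.1 (CMCS.mem_hyp h)

theorem con_empty : CCon ∅ := by
  intro h
  have hs := ND.soundness h (M := ⟨PUnit, ⟨PUnit.unit⟩, fun _ _ => False, fun _ => ∅⟩) Set.univ (by simp)
  have h2 : (Set.univ : Set PUnit) = ∅ := hs
  simp [Set.eq_empty_iff_forall_notMem] at h2

theorem exists_mcs : ∃ w, CMCS w := by
  obtain ⟨w, _, hw⟩ := lindenbaum con_empty
  exact ⟨w, hw⟩

/-- The canonical model. -/
noncomputable def canM : KModel where
  W := {w : Set CForm // CMCS w}
  ne := ⟨⟨exists_mcs.choose, exists_mcs.choose_spec⟩⟩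
  R := fun w u => ∀ α : CForm, CForm.box α ∈ w.1 → α ∈ u.1
  V := fun p => {w | CForm.var p ∈ w.1}

theorem box_transfer {w : Set CForm} (hw : CMCS w) (α : CForm)
    (h : ND (CForm.toMDV '' {β | CForm.box β ∈ w}) α.toMDV) :
    CForm.box α ∈ w := by
  obtain ⟨Δ₀, hsub, hfin, hd₀⟩ := ND.finite_premises h
  set B : Set CForm := {δ ∈ {β | CForm.box β ∈ w} | δ.toMDV ∈ Δ₀} with hB
  have hBfin : B.Finite := by
    refine Set.Finite.subset
      (Set.Finite.preimage (f := CForm.toMDV)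
        (Set.injOn_of_injective toMDV_injective) hfin) ?_
    intro x hx; exact hx.2
  set l : List MDVForm := hBfin.toFinset.toList.map CForm.toMDV with hl
  have hlset : {χ | χ ∈ l} = CForm.toMDV '' B := by
    ext x
    simp [hl, Set.mem_image]
  refine hw.prov_mem (ND.boxMon l ?_ ?_)
  · intro χ hχ
    rw [hl] at hχ
    simp only [List.mem_map, Finset.mem_toList, Set.Finite.mem_toFinset] at hχ
    obtain ⟨δ, hδ, rfl⟩ := hχ
    exact CMCS.mem_hyp (show CForm.box δ ∈ w from hδ.1)
  · refine ND.weaken hd₀ ?_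
    rw [hlset]
    intro x hx
    obtain ⟨δ, hδ, rfl⟩ := hsub hx
    exact Set.mem_image_of_mem _ ⟨hδ, hx⟩

end Canonical
theorem canR_iff {w u : canM.W} : canM.R w u ↔ ∀ α : CForm, CForm.box α ∈ w.1 → α ∈ u.1 :=
  Iff.rfl

theorem truth_lemma : ∀ (α : CForm) (w : canM.W), canM.csat {w} α ↔ α ∈ w.1 := by
  intro α
  induction α with
  | var p =>
    intro w
    show {w} ⊆ canM.V p ↔ _
    exact Set.singleton_subset_iff
  | bot =>
    intro w
    constructor
    · intro h
      exact absurd (h : ({w} : Set canM.W) = ∅) (Set.singleton_ne_empty w)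
    · intro h
      exact absurd (CMCS.mem_hyp h) w.2.con
  | neg a ih =>
    intro w
    constructor
    · intro h
      refine (w.2.neg_mem_iff).2 fun hmem => ?_
      exact h w rfl ((ih w).2 hmem)
    · intro h u hu hc
      rw [Set.mem_singleton_iff] at hu
      subst hu
      exact (u.2.neg_mem_iff).1 h ((ih u).1 hc)
  | and a b iha ihb =>
    intro w
    constructor
    · rintro ⟨h1, h2⟩
      exact w.2.prov_mem (ND.andI (CMCS.mem_hyp ((iha w).1 h1)) (CMCS.mem_hyp ((ihb w).1 h2)))
    · intro h
      refine ⟨(iha w).2 (w.2.prov_mem (ND.andE1 (CMCS.mem_hyp h))),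
        (ihb w).2 (w.2.prov_mem (ND.andE2 (CMCS.mem_hyp h)))⟩
  | tensor a b iha ihb =>
    intro w
    constructor
    · rintro ⟨Y, Z, hYZ, hY, hZ⟩
      have hw : w ∈ Y ∪ Z := hYZ ▸ rfl
      rcases hw with hw | hw
      · have : a ∈ w.1 := (iha w).1 ((canM.csat_flat a Y).1 hY w hw)
        exact w.2.prov_mem (ND.tensorI _ (CMCS.mem_hyp this))
      · have : b ∈ w.1 := (ihb w).1 ((canM.csat_flat b Z).1 hZ w hw)
        exact w.2.prov_mem (ND.tensorComm (ND.tensorI _ (CMCS.mem_hyp this)))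
    · intro h
      have hab : a ∈ w.1 ∨ b ∈ w.1 := by
        by_contra hc
        push_neg at hc
        have hna : CForm.neg a ∈ w.1 := (w.2.neg_mem_iff).2 hc.1
        have hnb : CForm.neg b ∈ w.1 := (w.2.neg_mem_iff).2 hc.2
        refine w.2.con (ND.tensorE CForm.bot (CMCS.mem_hyp h) ?_ ?_)
        · exact ND.negE a (ND.hyp (Set.mem_insert _ _))
            (ND.weaken (CMCS.mem_hyp hna) (Set.subset_insert _ _))
        · exact ND.negE b (ND.hyp (Set.mem_insert _ _))
            (ND.weaken (CMCS.mem_hyp hnb) (Set.subset_insert _ _))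
      rcases hab with ha | hb
      · exact ⟨{w}, ∅, (Set.union_empty _).symm, (iha w).2 ha, canM.csat_empty b⟩
      · exact ⟨∅, {w}, (Set.empty_union _).symm, canM.csat_empty a, (ihb w).2 hb⟩
  | box a ih =>
    intro w
    constructor
    · intro h
      by_contra hbox
      have hcon : CCon (insert (CForm.neg a) {β | CForm.box β ∈ w.1}) := by
        intro hnd
        rw [Set.image_insert_eq] at hnd
        exact hbox (box_transfer w.2 a (ND.dne a (ND.negI (CForm.neg a) hnd)))
      obtain ⟨u, hsubu, hu⟩ := lindenbaum hcon
      have hR : canM.R w ⟨u, hu⟩ := fun β hβ =>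
        hsubu (Set.mem_insert_of_mem _ hβ)
      have hmem : (⟨u, hu⟩ : canM.W) ∈ canM.img {w} := ⟨w, rfl, hR⟩
      have hcu : canM.csat {(⟨u, hu⟩ : canM.W)} a :=
        (canM.csat_flat a (canM.img {w})).1 h _ hmem
      have : a ∈ u := (ih ⟨u, hu⟩).1 hcu
      exact (hu.neg_mem_iff).1 (hsubu (Set.mem_insert _ _)) this
    · intro h
      show canM.csat (canM.img {w}) a
      refine (canM.csat_flat a _).2 ?_
      rintro u ⟨v, hv, hR⟩
      rw [Set.mem_singleton_iff] at hv
      subst hv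
      exact (ih u).2 (hR a h)
  | dia a ih =>
    intro w
    constructor
    · rintro ⟨Y, ⟨hsub, hsucc⟩, hY⟩
      obtain ⟨u, huY, hR⟩ := hsucc w rfl
      have hau : a ∈ u.1 := (ih u).1 ((canM.csat_flat a Y).1 hY u huY)
      by_cases hb : CForm.box (CForm.neg a) ∈ w.1
      · exact absurd hau ((u.2.neg_mem_iff).1 (hR _ hb))
      · have hnb : CForm.neg (CForm.box (CForm.neg a)) ∈ w.1 := (w.2.neg_mem_iff).2 hb
        have h1 : ND (CForm.toMDV '' w.1) (MDVForm.dia (.cneg (CForm.neg a))) :=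
          ND.interBoxDia (CForm.neg a) (CMCS.mem_hyp hnb)
        exact w.2.prov_mem (ND.diaMon h1 (ND.dne a (ND.hyp rfl)))
    · intro h
      have hbox : CForm.box (CForm.neg a) ∉ w.1 := by
        intro hb
        have hnn : ND {a.toMDV} (MDVForm.cneg (CForm.neg a)) :=
          ND.negI (CForm.neg a)
            (ND.negE a (ND.hyp (Set.mem_insert_of_mem _ rfl)) (ND.hyp (Set.mem_insert _ _)))
        have h2 : ND (CForm.toMDV '' w.1) (MDVForm.dia (.cneg (CForm.neg a))) :=
          ND.diaMon (CMCS.mem_hyp h) hnn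
        exact w.2.con (ND.negE (CForm.box (CForm.neg a)) (CMCS.mem_hyp hb)
          (ND.interDiaBox (CForm.neg a) h2))
      have hcon : CCon (insert a {β | CForm.box β ∈ w.1}) := by
        intro hnd
        rw [Set.image_insert_eq] at hnd
        exact hbox (box_transfer w.2 (CForm.neg a) (ND.negI a hnd))
      obtain ⟨u, hsubu, hu⟩ := lindenbaum hcon
      have hR : canM.R w ⟨u, hu⟩ := fun β hβ => hsubu (Set.mem_insert_of_mem _ hβ)
      refine ⟨{⟨u, hu⟩}, ⟨?_, ?_⟩, ?_⟩
      · intro x hx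
        replace hx : x = ⟨u, hu⟩ := hx
        subst hx
        exact ⟨w, rfl, hR⟩
      · intro v hv
        rw [Set.mem_singleton_iff] at hv
        subst hv
        exact ⟨⟨u, hu⟩, rfl, hR⟩
      · refine (canM.csat_flat a _).2 ?_
        intro x hx
        replace hx : x = ⟨u, hu⟩ := hx
        subst hx
        exact (ih ⟨u, hu⟩).2 (hsubu (Set.mem_insert _ _))
/-- Replace each dependence atom by its defining tensor formula. -/
def elimDep : MDVForm → MDVForm
  | .var p => .var p
  | .bot => .bot
  | .cneg α => .cneg α
  | .dep αs β => depTensor αs β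
  | .and φ ψ => .and (elimDep φ) (elimDep ψ)
  | .tensor φ ψ => .tensor (elimDep φ) (elimDep ψ)
  | .or φ ψ => .or (elimDep φ) (elimDep ψ)
  | .box φ => .box (elimDep φ)
  | .dia φ => .dia (elimDep φ)

/-- Dep-free formulas. -/
inductive DepFree : MDVForm → Prop
  | var (p : ℕ) : DepFree (.var p)
  | bot : DepFree .bot
  | cneg (α : CForm) : DepFree (.cneg α)
  | and {φ ψ} : DepFree φ → DepFree ψ → DepFree (.and φ ψ)
  | tensor {φ ψ} : DepFree φ → DepFree ψ → DepFree (.tensor φ ψ)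
  | or {φ ψ} : DepFree φ → DepFree ψ → DepFree (.or φ ψ)
  | box {φ} : DepFree φ → DepFree (.box φ)
  | dia {φ} : DepFree φ → DepFree (.dia φ)

theorem depFree_toMDV (α : CForm) : DepFree α.toMDV := by
  induction α with
  | var p => exact DepFree.var p
  | bot => exact DepFree.bot
  | neg γ => exact DepFree.cneg γ
  | and a b iha ihb => exact DepFree.and iha ihb
  | tensor a b iha ihb => exact DepFree.tensor iha ihb
  | box a ih => exact DepFree.box ih
  | dia a ih => exact DepFree.dia ih

theorem depFree_zipWith_signed :
    ∀ (v : List Bool) (αs : List CForm), ∀ ψ ∈ List.zipWith signed v αs, DepFree ψ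
  | [], _, ψ, h => by simp at h
  | _ :: _, [], ψ, h => by simp at h
  | b :: v, a :: αs, ψ, h => by
    rcases List.mem_cons.1 h with rfl | h
    · cases b
      · exact DepFree.cneg a
      · exact depFree_toMDV a
    · exact depFree_zipWith_signed v αs ψ h

theorem depFree_bigAnd {l : List MDVForm} (h : ∀ φ ∈ l, DepFree φ) :
    DepFree (bigAnd l) := by
  induction l with
  | nil => exact DepFree.bot
  | cons x T ih =>
    match T with
    | [] => exact h x (by simp)
    | y :: T' =>
      exact DepFree.and (h x (by simp)) (ih fun φ hφ => h φ (by simp [hφ]))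

theorem depFree_bigTensor {l : List MDVForm} (h : ∀ φ ∈ l, DepFree φ) :
    DepFree (bigTensor l) := by
  induction l with
  | nil => exact DepFree.bot
  | cons x T ih =>
    match T with
    | [] => exact h x (by simp)
    | y :: T' =>
      exact DepFree.tensor (h x (by simp)) (ih fun φ hφ => h φ (by simp [hφ]))

theorem depFree_depTensor (αs : List CForm) (β : CForm) :
    DepFree (depTensor αs β) := by
  refine depFree_bigTensor ?_
  intro φ hφ
  obtain ⟨v, hv, rfl⟩ := List.mem_map.1 hφ
  refine depFree_bigAnd ?_
  intro ψ hψ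
  rcases List.mem_append.1 hψ with hψ | hψ
  · exact depFree_zipWith_signed v αs ψ hψ
  · rw [List.mem_singleton.1 hψ]
    exact DepFree.or (depFree_toMDV β) (DepFree.cneg β)

theorem depFree_elimDep (φ : MDVForm) : DepFree (elimDep φ) := by
  induction φ with
  | var p => exact DepFree.var p
  | bot => exact DepFree.bot
  | cneg α => exact DepFree.cneg α
  | dep αs β => exact depFree_depTensor αs β
  | and φ ψ ihφ ihψ => exact DepFree.and ihφ ihψ
  | tensor φ ψ ihφ ihψ => exact DepFree.tensor ihφ ihψ
  | or φ ψ ihφ ihψ => exact DepFree.or ihφ ihψ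
  | box φ ih => exact DepFree.box ih
  | dia φ ih => exact DepFree.dia ih

private theorem sing_sub {φ ψ : MDVForm} : ({φ} : Set MDVForm) ⊆ insert φ {ψ} := by
  intro x hx
  rcases hx with rfl
  exact Set.mem_insert _ _

private theorem list_one_set (φ : MDVForm) : {χ | χ ∈ [φ]} = ({φ} : Set MDVForm) := by
  ext x; simp

theorem nd_elim₁ (φ : MDVForm) : ND {φ} (elimDep φ) := by
  induction φ with
  | var p => exact ND.hyp rfl
  | bot => exact ND.hyp rfl
  | cneg α => exact ND.hyp rfl
  | dep αs β => exact ND.depE αs β (ND.hyp rfl)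
  | and φ ψ ihφ ihψ =>
    exact ND.andI (ND.comp (ND.andE1 (ND.hyp rfl)) ihφ)
      (ND.comp (ND.andE2 (ND.hyp rfl)) ihψ)
  | tensor φ ψ ihφ ihψ =>
    have h1 : ND {φ.tensor ψ} (φ.tensor (elimDep ψ)) :=
      ND.tensorSub (ND.hyp rfl) (ND.weaken ihψ (by
        intro x hx; rcases hx with rfl; exact Set.mem_insert _ _))
    have h2 : ND {φ.tensor ψ} ((elimDep ψ).tensor (elimDep φ)) :=
      ND.tensorSub (ND.tensorComm h1) (ND.weaken ihφ (by
        intro x hx; rcases hx with rfl; exact Set.mem_insert _ _))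
    exact ND.tensorComm h2
  | or φ ψ ihφ ihψ =>
    refine ND.orE (ND.hyp rfl) ?_ ?_
    · exact ND.orI1 (ND.weaken ihφ sing_sub)
    · exact ND.orI2 (ND.weaken ihψ sing_sub)
  | box φ ih =>
    refine ND.boxMon [φ] ?_ ?_
    · intro χ hχ
      rcases List.mem_singleton.1 hχ with rfl
      exact ND.hyp rfl
    · rw [list_one_set]; exact ih
  | dia φ ih => exact ND.diaMon (ND.hyp rfl) ih

theorem nd_elim₂ (φ : MDVForm) : ND {elimDep φ} φ := by
  induction φ with
  | var p => exact ND.hyp rfl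
  | bot => exact ND.hyp rfl
  | cneg α => exact ND.hyp rfl
  | dep αs β => exact ND.depI αs β (ND.hyp rfl)
  | and φ ψ ihφ ihψ =>
    exact ND.andI (ND.comp (ND.andE1 (ND.hyp rfl)) ihφ)
      (ND.comp (ND.andE2 (ND.hyp rfl)) ihψ)
  | tensor φ ψ ihφ ihψ =>
    have h1 : ND {(elimDep φ).tensor (elimDep ψ)} ((elimDep φ).tensor ψ) :=
      ND.tensorSub (ND.hyp rfl) (ND.weaken ihψ (by
        intro x hx; rcases hx with rfl; exact Set.mem_insert _ _))
    have h2 : ND {(elimDep φ).tensor (elimDep ψ)} (ψ.tensor φ) :=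
      ND.tensorSub (ND.tensorComm h1) (ND.weaken ihφ (by
        intro x hx; rcases hx with rfl; exact Set.mem_insert _ _))
    exact ND.tensorComm h2
  | or φ ψ ihφ ihψ =>
    refine ND.orE (ND.hyp rfl) ?_ ?_
    · exact ND.orI1 (ND.weaken ihφ sing_sub)
    · exact ND.orI2 (ND.weaken ihψ sing_sub)
  | box φ ih =>
    refine ND.boxMon [elimDep φ] ?_ ?_
    · intro χ hχ
      rcases List.mem_singleton.1 hχ with rfl
      exact ND.hyp rfl
    · rw [list_one_set]; exact ih
  | dia φ ih => exact ND.diaMon (ND.hyp rfl) ih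

/-- Resolutions of a dep-free formula. -/
def res : MDVForm → List CForm
  | .var p => [.var p]
  | .bot => [.bot]
  | .cneg α => [.neg α]
  | .dep _ _ => []
  | .and φ ψ => (res φ).flatMap fun a => (res ψ).map (CForm.and a)
  | .tensor φ ψ => (res φ).flatMap fun a => (res ψ).map (CForm.tensor a)
  | .or φ ψ => res φ ++ res ψ
  | .box φ => (res φ).map .box
  | .dia φ => (res φ).map .dia

theorem res_mem {φ : MDVForm} (h : DepFree φ) : ∃ α, α ∈ res φ := by
  induction h with
  | var p => exact ⟨.var p, by simp [res]⟩
  | bot => exact ⟨.bot, by simp [res]⟩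
  | cneg α => exact ⟨.neg α, by simp [res]⟩
  | and _ _ ih₁ ih₂ =>
    obtain ⟨a, ha⟩ := ih₁
    obtain ⟨b, hb⟩ := ih₂
    exact ⟨a.and b, List.mem_flatMap.2 ⟨a, ha, List.mem_map.2 ⟨b, hb, rfl⟩⟩⟩
  | tensor _ _ ih₁ ih₂ =>
    obtain ⟨a, ha⟩ := ih₁
    obtain ⟨b, hb⟩ := ih₂
    exact ⟨a.tensor b, List.mem_flatMap.2 ⟨a, ha, List.mem_map.2 ⟨b, hb, rfl⟩⟩⟩
  | or _ _ ih₁ ih₂ =>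
    obtain ⟨a, ha⟩ := ih₁
    exact ⟨a, List.mem_append_left _ ha⟩
  | box _ ih =>
    obtain ⟨a, ha⟩ := ih
    exact ⟨.box a, List.mem_map.2 ⟨a, ha, rfl⟩⟩
  | dia _ ih =>
    obtain ⟨a, ha⟩ := ih
    exact ⟨.dia a, List.mem_map.2 ⟨a, ha, rfl⟩⟩

theorem res_ne0 {φ : MDVForm} (h : DepFree φ) : res φ ≠ [] := by
  obtain ⟨a, ha⟩ := res_mem h
  exact List.ne_nil_of_mem ha

theorem res_ne {φ : MDVForm} (h : DepFree φ) : (res φ).map CForm.toMDV ≠ [] := by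
  obtain ⟨a, ha⟩ := res_mem h
  exact List.ne_nil_of_mem (List.mem_map.2 ⟨a, ha, rfl⟩)

/-- Each resolution implies the formula. -/
theorem res_imp {φ : MDVForm} (h : DepFree φ) : ∀ α ∈ res φ, ND {α.toMDV} φ := by
  induction h with
  | var p => intro α hα; rcases List.mem_singleton.1 hα with rfl; exact ND.hyp rfl
  | bot => intro α hα; rcases List.mem_singleton.1 hα with rfl; exact ND.hyp rfl
  | cneg β => intro α hα; rcases List.mem_singleton.1 hα with rfl; exact ND.hyp rfl
  | and _ _ ih₁ ih₂ =>
    intro α hα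
    obtain ⟨a, ha, hmap⟩ := List.mem_flatMap.1 hα
    obtain ⟨b, hb, rfl⟩ := List.mem_map.1 hmap
    exact ND.andI (ND.comp (ND.andE1 (ND.hyp rfl)) (ih₁ a ha))
      (ND.comp (ND.andE2 (ND.hyp rfl)) (ih₂ b hb))
  | @tensor φ ψ _ _ ih₁ ih₂ =>
    intro α hα
    obtain ⟨a, ha, hmap⟩ := List.mem_flatMap.1 hα
    obtain ⟨b, hb, rfl⟩ := List.mem_map.1 hmap
    have h1 : ND {(a.tensor b).toMDV} (MDVForm.tensor a.toMDV ψ) :=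
      ND.tensorSub (ND.hyp rfl) (ND.weaken (ih₂ b hb) (by
        intro x hx; rcases hx with rfl; exact Set.mem_insert _ _))
    have h2 : ND {(a.tensor b).toMDV} (ψ.tensor φ) :=
      ND.tensorSub (ND.tensorComm h1) (ND.weaken (ih₁ a ha) (by
        intro x hx; rcases hx with rfl; exact Set.mem_insert _ _))
    exact ND.tensorComm h2
  | or _ _ ih₁ ih₂ =>
    intro α hα
    rcases List.mem_append.1 hα with hα | hα
    · exact ND.orI1 (ih₁ α hα)
    · exact ND.orI2 (ih₂ α hα)
  | box _ ih =>
    intro α hα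
    obtain ⟨a, ha, rfl⟩ := List.mem_map.1 hα
    refine ND.boxMon [a.toMDV] ?_ ?_
    · intro χ hχ
      rcases List.mem_singleton.1 hχ with rfl
      exact ND.hyp rfl
    · rw [list_one_set]; exact ih a ha
  | dia _ ih =>
    intro α hα
    obtain ⟨a, ha, rfl⟩ := List.mem_map.1 hα
    exact ND.diaMon (ND.hyp rfl) (ih a ha)

theorem ND.bigOr_mono {Γ : Set MDVForm} {l₁ l₂ : List MDVForm}
    (hsub : ∀ x ∈ l₁, x ∈ l₂) (h : ND Γ (bigOr l₁)) : ND Γ (bigOr l₂) := by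
  match l₁ with
  | [] => exact ND.exfalso h
  | x :: T =>
    refine ND.bigOr_elim (by simp) h ?_
    intro φ hφ
    exact ND.bigOr_intro (hsub φ hφ) (ND.hyp (Set.mem_insert _ _))

/-- The formula implies the disjunction of its resolutions. -/
theorem res_cover {φ : MDVForm} (h : DepFree φ) :
    ND {φ} (bigOr ((res φ).map CForm.toMDV)) := by
  induction h with
  | var p => exact ND.hyp rfl
  | bot => exact ND.hyp rfl
  | cneg β => exact ND.hyp rfl
  | @and φ ψ hφ hψ ih₁ ih₂ =>
    have h1 : ND {φ.and ψ} (bigOr ((res φ).map CForm.toMDV)) :=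
      ND.comp (ND.andE1 (ND.hyp rfl)) ih₁
    have h2 : ND {φ.and ψ} (bigOr ((res ψ).map CForm.toMDV)) :=
      ND.comp (ND.andE2 (ND.hyp rfl)) ih₂
    refine ND.bigOr_elim (res_ne hφ) h1 ?_
    intro χ hχ
    obtain ⟨a, ha, rfl⟩ := List.mem_map.1 hχ
    refine ND.bigOr_elim (res_ne hψ) (ND.weaken h2 (Set.subset_insert _ _)) ?_
    intro χ' hχ'
    obtain ⟨b, hb, rfl⟩ := List.mem_map.1 hχ'
    refine ND.bigOr_intro (l := (res (φ.and ψ)).map CForm.toMDV)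
      (List.mem_map.2 ⟨a.and b,
        List.mem_flatMap.2 ⟨a, ha, List.mem_map.2 ⟨b, hb, rfl⟩⟩, rfl⟩) ?_
    exact ND.andI (ND.hyp (Set.mem_insert_of_mem _ (Set.mem_insert _ _)))
      (ND.hyp (Set.mem_insert _ _))
  | @tensor φ ψ hφ hψ ih₁ ih₂ =>
    have h1 : ND {φ.tensor ψ} (φ.tensor (bigOr ((res ψ).map CForm.toMDV))) :=
      ND.tensorSub (ND.hyp rfl) (ND.weaken ih₂ (by
        intro x hx; rcases hx with rfl; exact Set.mem_insert _ _))
    have h2 := ND.tensor_bigOr (res_ne hψ) h1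
    refine ND.bigOr_elim (by simp [res_ne0 hψ]) h2 ?_
    intro χ hχ
    obtain ⟨y, hy, rfl⟩ := List.mem_map.1 hχ
    obtain ⟨b, hb, rfl⟩ := List.mem_map.1 hy
    have h3 : ND (insert (MDVForm.tensor φ b.toMDV) {φ.tensor ψ})
        (MDVForm.tensor b.toMDV (bigOr ((res φ).map CForm.toMDV))) :=
      ND.tensorSub (ND.tensorComm (ND.hyp (Set.mem_insert _ _)))
        (ND.weaken ih₁ (by
          intro x hx; rcases hx with rfl
          exact Set.mem_insert _ _))
    have h4 := ND.tensor_bigOr (res_ne hφ) h3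
    refine ND.bigOr_elim (by simp [res_ne0 hφ]) h4 ?_
    intro χ' hχ'
    obtain ⟨y', hy', rfl⟩ := List.mem_map.1 hχ'
    obtain ⟨a, ha, rfl⟩ := List.mem_map.1 hy'
    refine ND.bigOr_intro (l := (res (φ.tensor ψ)).map CForm.toMDV)
      (List.mem_map.2 ⟨a.tensor b,
        List.mem_flatMap.2 ⟨a, ha, List.mem_map.2 ⟨b, hb, rfl⟩⟩, rfl⟩) ?_
    exact ND.tensorComm (ND.hyp (Set.mem_insert _ _))
  | @or φ ψ hφ hψ ih₁ ih₂ =>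
    refine ND.orE (ND.hyp rfl) ?_ ?_
    · refine ND.bigOr_mono (l₁ := (res φ).map CForm.toMDV) ?_
        (ND.weaken ih₁ sing_sub)
      intro x hx
      show x ∈ (res (φ.or ψ)).map CForm.toMDV
      rw [show res (φ.or ψ) = res φ ++ res ψ from rfl, List.map_append]
      exact List.mem_append_left _ hx
    · refine ND.bigOr_mono (l₁ := (res ψ).map CForm.toMDV) ?_
        (ND.weaken ih₂ sing_sub)
      intro x hx
      show x ∈ (res (φ.or ψ)).map CForm.toMDV
      rw [show res (φ.or ψ) = res φ ++ res ψ from rfl, List.map_append]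
      exact List.mem_append_right _ hx
  | @box φ hφ ih =>
    have h1 : ND {MDVForm.box φ} (MDVForm.box (bigOr ((res φ).map CForm.toMDV))) := by
      refine ND.boxMon [φ] ?_ ?_
      · intro χ hχ
        rcases List.mem_singleton.1 hχ with rfl
        exact ND.hyp rfl
      · rw [list_one_set]; exact ih
    have h2 := ND.box_bigOr (res_ne hφ) h1
    have hlist : ((res φ).map CForm.toMDV).map MDVForm.box
        = (res (MDVForm.box φ)).map CForm.toMDV := by
      show _ = ((res φ).map CForm.box).map CForm.toMDV
      rw [List.map_map, List.map_map]
      rfl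
    rwa [hlist] at h2
  | @dia φ hφ ih =>
    have h1 : ND {MDVForm.dia φ} (MDVForm.dia (bigOr ((res φ).map CForm.toMDV))) :=
      ND.diaMon (ND.hyp rfl) ih
    have h2 := ND.dia_bigOr (res_ne hφ) h1
    have hlist : ((res φ).map CForm.toMDV).map MDVForm.dia
        = (res (MDVForm.dia φ)).map CForm.toMDV := by
      show _ = ((res φ).map CForm.dia).map CForm.toMDV
      rw [List.map_map, List.map_map]
      rfl
    rwa [hlist] at h2
theorem ndToRes (φ : MDVForm) :
    ND {φ} (bigOr ((res (elimDep φ)).map CForm.toMDV)) :=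
  ND.comp (nd_elim₁ φ) (res_cover (depFree_elimDep φ))

theorem ndFromRes (φ : MDVForm) {α : CForm} (hα : α ∈ res (elimDep φ)) :
    ND {α.toMDV} φ :=
  ND.comp (res_imp (depFree_elimDep φ) α hα) (nd_elim₂ φ)

theorem exists_saturated (Γ : Set MDVForm) (φ : MDVForm) (h : ¬ ND Γ φ) :
    ∃ Γ', Γ ⊆ Γ' ∧ ¬ ND Γ' φ ∧
      ∀ ψ χ : MDVForm, ND Γ' (ψ.or χ) → (ND Γ' ψ ∨ ND Γ' χ) := by
  have hZ : ∀ c ⊆ {Δ : Set MDVForm | Γ ⊆ Δ ∧ ¬ ND Δ φ}, IsChain (· ⊆ ·) c →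
      c.Nonempty → ∃ ub ∈ {Δ : Set MDVForm | Γ ⊆ Δ ∧ ¬ ND Δ φ}, ∀ s ∈ c, s ⊆ ub := by
    intro c hcS hchain hcne
    refine ⟨⋃₀ c, ⟨?_, ?_⟩, fun s hs => Set.subset_sUnion_of_mem hs⟩
    · obtain ⟨t, ht⟩ := hcne
      exact subset_trans (hcS ht).1 (Set.subset_sUnion_of_mem ht)
    · intro hd
      obtain ⟨Δ₀, hsub, hfin, hd₀⟩ := ND.finite_premises hd
      obtain ⟨t, htc, hBt⟩ := finite_subset_chain hchain hcne hfin hsub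
      exact (hcS htc).2 (ND.weaken hd₀ hBt)
  obtain ⟨m, hΓm, hmax⟩ := zorn_subset_nonempty _ hZ Γ ⟨subset_rfl, h⟩
  refine ⟨m, hΓm, hmax.1.2, ?_⟩
  intro ψ χ hor
  by_cases h1 : ND (insert ψ m) φ
  · by_cases h2 : ND (insert χ m) φ
    · exact absurd (ND.orE hor h1 h2) hmax.1.2
    · right
      have hmem : insert χ m ⊆ m :=
        hmax.2 ⟨subset_trans hΓm (Set.subset_insert _ _), h2⟩ (Set.subset_insert _ _)
      exact ND.hyp (hmem (Set.mem_insert _ _))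
  · left
    have hmem : insert ψ m ⊆ m :=
      hmax.2 ⟨subset_trans hΓm (Set.subset_insert _ _), h1⟩ (Set.subset_insert _ _)
    exact ND.hyp (hmem (Set.mem_insert _ _))

theorem bigOr_sat {Γ' : Set MDVForm}
    (hsat : ∀ ψ χ : MDVForm, ND Γ' (ψ.or χ) → (ND Γ' ψ ∨ ND Γ' χ)) :
    ∀ l : List MDVForm, ND Γ' (bigOr l) → ND Γ' MDVForm.bot ∨ ∃ ψ ∈ l, ND Γ' ψ
  | [], h => Or.inl h
  | [x], h => Or.inr ⟨x, by simp, h⟩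
  | x :: y :: T, h => by
    rcases hsat x (bigOr (y :: T)) h with h1 | h1
    · exact Or.inr ⟨x, by simp, h1⟩
    · rcases bigOr_sat hsat (y :: T) h1 with h2 | ⟨ψ, hψ, h2⟩
      · exact Or.inl h2
      · exact Or.inr ⟨ψ, by simp [hψ], h2⟩

theorem sat_bigOr {M : KModel} {X : Set M.W} :
    ∀ l : List MDVForm, M.sat X (bigOr l) → X = ∅ ∨ ∃ ψ ∈ l, M.sat X ψ
  | [], h => Or.inl h
  | [x], h => Or.inr ⟨x, by simp, h⟩
  | x :: y :: T, h => by
    rcases h with h | h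
    · exact Or.inr ⟨x, by simp, h⟩
    · rcases sat_bigOr (y :: T) h with h2 | ⟨ψ, hψ, h2⟩
      · exact Or.inl h2
      · exact Or.inr ⟨ψ, by simp [hψ], h2⟩

theorem mdv_completeness {Γ : Set MDVForm} {φ : MDVForm}
    (hent : SetEntails Γ φ) : ND Γ φ := by
  by_contra hnd
  obtain ⟨Γ', hΓsub, hnφ, hsat⟩ := exists_saturated Γ φ hnd
  set D : Set CForm := {δ | ND Γ' δ.toMDV} with hD
  have hno : ∀ β ∈ res (elimDep φ), ¬ ND Γ' β.toMDV := by
    intro β hβ hdβ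
    exact hnφ (ND.comp hdβ (ndFromRes φ hβ))
  have hconβ : ∀ β ∈ res (elimDep φ), CCon (insert (CForm.neg β) D) := by
    intro β hβ hnd'
    rw [Set.image_insert_eq] at hnd'
    have h1 : ND (CForm.toMDV '' D) β.toMDV := ND.dne β (ND.negI (CForm.neg β) hnd')
    have h2 : ND Γ' β.toMDV := by
      refine ND.cutSet h1 ?_
      rintro χ ⟨δ, hδ, rfl⟩
      exact hδ
    exact hno β hβ h2
  have hpick : ∀ β ∈ res (elimDep φ), ∃ w : canM.W, D ⊆ w.1 ∧ β ∉ w.1 := by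
    intro β hβ
    obtain ⟨u, hsub, hu⟩ := lindenbaum (hconβ β hβ)
    refine ⟨⟨u, hu⟩, ?_, ?_⟩
    · intro δ hδ
      exact hsub (Set.mem_insert_of_mem _ hδ)
    · exact (hu.neg_mem_iff).1 (hsub (Set.mem_insert _ _))
  choose pick hpick1 hpick2 using hpick
  set X : Set canM.W := {w | ∃ β, ∃ hβ : β ∈ res (elimDep φ), w = pick β hβ} with hX
  have hXD : ∀ δ ∈ D, canM.csat X δ := by
    intro δ hδ
    refine (canM.csat_flat δ X).2 ?_
    rintro w ⟨β, hβ, rfl⟩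
    exact (truth_lemma δ _).2 (hpick1 β hβ hδ)
  have hXΓ : ∀ γ ∈ Γ, canM.sat X γ := by
    intro γ hγ
    have h1 : ND Γ' (bigOr ((res (elimDep γ)).map CForm.toMDV)) :=
      ND.comp (ND.hyp (hΓsub hγ)) (ndToRes γ)
    rcases bigOr_sat hsat _ h1 with h2 | ⟨ψ, hψ, h2⟩
    · exact absurd (ND.exfalso h2) hnφ
    · obtain ⟨α, hα, rfl⟩ := List.mem_map.1 hψ
      have hαD : α ∈ D := h2
      have hsatα : canM.sat X α.toMDV := (KModel.sat_toMDV α X).2 (hXD α hαD)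
      have := ND.soundness (ndFromRes γ hα) canM X ?_
      · exact this
      · rintro χ hχ
        rw [Set.mem_singleton_iff] at hχ
        subst hχ
        exact hsatα
  have hXne : X ≠ ∅ := by
    obtain ⟨β, hβ⟩ := res_mem (depFree_elimDep φ)
    intro he
    have : pick β hβ ∈ X := ⟨β, hβ, rfl⟩
    rw [he] at this
    exact this
  have hXφ : canM.sat X φ := hent canM X hXΓ
  have hXbig : canM.sat X (bigOr ((res (elimDep φ)).map CForm.toMDV)) := by
    refine ND.soundness (ndToRes φ) canM X ?_
    rintro χ hχ
    rw [Set.mem_singleton_iff] at hχ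
    subst hχ
    exact hXφ
  rcases sat_bigOr _ hXbig with h2 | ⟨ψ, hψ, h2⟩
  · exact hXne h2
  · obtain ⟨β, hβ, rfl⟩ := List.mem_map.1 hψ
    have hcs : canM.csat X β := (KModel.sat_toMDV β X).1 h2
    have hw : pick β hβ ∈ X := ⟨β, hβ, rfl⟩
    exact hpick2 β hβ
      ((truth_lemma β _).1 ((canM.csat_flat β X).1 hcs _ hw))

/-- STATEMENT 12: Strong Completeness (and soundness) of the natural deduction
system of MD∨: Γ⊨φ iff Γ⊢φ. -/
theorem mdv_strong_completeness (Γ : Set MDVForm) (φ : MDVForm) :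
    SetEntails Γ φ ↔ ND Γ φ :=
  ⟨mdv_completeness, ND.soundness⟩
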